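/- arXiv:1508.03774 — 2 statements merged into one kernel-verified Lean document; each statement's English description precedes it below -/
import Mathlib

section
/- Let T ∈ UB(n) with n ≥ 4 leaves and c cherries. Then p_1(T) = n − 3, p_2(T) = n + c − 6, and for every k ≥ 3, p_k(T) = 4·p_{k−2}(T) − h_k(T) − m_k(T), where m_k(T) is the number of paths of length k in T whose two endpoints are both leaves, and h_k(T) is the number of paths of length k in T exactly one of whose endpoints is a leaf. -/
open SimpleGraph

noncomputable section

namespace Phylo

/-- Vertex type for (representatives of) unrooted binary phylogenetic trees with `n` leaves:
`n` leaf vertices (labelled by `Fin n`) and `n - 2` internal vertices. -/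
abbrev V (n : ℕ) := Fin n ⊕ Fin (n - 2)

def isLeafV {n : ℕ} (v : V n) : Prop := ∃ i : Fin n, v = Sum.inl i

def isInternalV {n : ℕ} (v : V n) : Prop := ∃ j : Fin (n - 2), v = Sum.inr j

/-- `G` is a representative of a tree in `UB(n)`: a tree in which every leaf-labelled vertex
has degree one and every internal vertex has degree three.  Trees in `UB(n)` are identified
up to leaf-label-preserving isomorphism; every such tree has a representative on this fixed
vertex set, and two representatives are isomorphic iff they have the same set of splits. -/
def ubGraph (n : ℕ) (G : SimpleGraph (V n)) : Prop :=
  G.Connected ∧ G.IsAcyclic ∧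
    (∀ i : Fin n, (G.neighborSet (Sum.inl i)).ncard = 1) ∧
    (∀ j : Fin (n - 2), (G.neighborSet (Sum.inr j)).ncard = 3)

/-- The split (bipartition of the leaf label set) associated with the edge `e` of a tree
whose leaves are labelled by `lab` : the set consisting of the two leaf-label sets of the
two components of `G` minus `e`. -/
def splitOfL {α : Type} {n : ℕ} (G : SimpleGraph α) (lab : Fin n → α) (e : Sym2 α) :
    Set (Set (Fin n)) :=
  { L | ∃ v, v ∈ e ∧ L = { i | (G.deleteEdges {e}).Reachable (lab i) v } }

/-- The set of non-trivial splits of a labelled tree (splits associated with edges none of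
whose endpoints is a leaf). -/
def splitsL {α : Type} {n : ℕ} (G : SimpleGraph α) (lab : Fin n → α) :
    Set (Set (Set (Fin n))) :=
  { s | ∃ e ∈ G.edgeSet, (∀ v ∈ e, ¬ ∃ i, lab i = v) ∧ s = splitOfL G lab e }

def splitOf {n : ℕ} (G : SimpleGraph (V n)) (e : Sym2 (V n)) : Set (Set (Fin n)) :=
  splitOfL G Sum.inl e

/-- `Σ(T)`, the set of non-trivial splits. -/
def splits {n : ℕ} (G : SimpleGraph (V n)) : Set (Set (Set (Fin n))) :=
  splitsL G Sum.inl

def internalEdge {n : ℕ} (G : SimpleGraph (V n)) (e : Sym2 (V n)) : Prop :=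
  e ∈ G.edgeSet ∧ ∀ v ∈ e, isInternalV v

/-- Two edges are adjacent (share an endpoint). -/
def edgesShare {α : Type} (e f : Sym2 α) : Prop := ∃ v, v ∈ e ∧ v ∈ f

/-- Robinson–Foulds distance. -/
def rfDist {n : ℕ} (G₁ G₂ : SimpleGraph (V n)) : ℕ :=
  ((splits G₁ \ splits G₂).ncard + (splits G₂ \ splits G₁).ncard) / 2

/-- `|N^k_RF(T)|`: the number of trees in `UB(n)` (counted up to leaf-label-preserving
isomorphism, i.e. by their split sets) at RF distance exactly `k` from `G`. -/
def rfNbhdCard (n k : ℕ) (G : SimpleGraph (V n)) : ℕ :=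
  ({ s : Set (Set (Set (Fin n))) |
      ∃ G' : SimpleGraph (V n), ubGraph n G' ∧ rfDist G G' = k ∧ s = splits G' }).ncard

/-- NNI move across the internal edge `{x, y}`, swapping the subtree rooted at `z₁`
(adjacent to `x`) with the subtree rooted at `z₃` (adjacent to `y`). -/
def nniMoveData {n : ℕ} (G : SimpleGraph (V n)) (x y z₁ z₃ : V n)
    (G' : SimpleGraph (V n)) : Prop :=
  isInternalV x ∧ isInternalV y ∧ G.Adj x y ∧ G.Adj x z₁ ∧ G.Adj y z₃ ∧
    z₁ ≠ y ∧ z₃ ≠ x ∧ z₁ ≠ z₃ ∧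
    G' = fromEdgeSet ((G.edgeSet \ {s(x, z₁), s(y, z₃)}) ∪ {s(x, z₃), s(y, z₁)})

def nniMove {n : ℕ} (G G' : SimpleGraph (V n)) : Prop :=
  ∃ x y z₁ z₃, nniMoveData G x y z₁ z₃ G'

def nniStepRel {n : ℕ} (G H : SimpleGraph (V n)) : Prop := nniMove G H ∨ nniMove H G

/-- There is a chain of `k` single moves (each between trees in `UB(n)`) from `G` to
(a representative of) the tree `G'`. -/
def chainRel {n : ℕ} (step : SimpleGraph (V n) → SimpleGraph (V n) → Prop)
    (G : SimpleGraph (V n)) (k : ℕ) (G' : SimpleGraph (V n)) : Prop :=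
  ∃ f : ℕ → SimpleGraph (V n), f 0 = G ∧ splits (f k) = splits G' ∧
    (∀ i, i ≤ k → ubGraph n (f i)) ∧ ∀ i, i < k → step (f i) (f (i + 1))

def nniDist {n : ℕ} (G G' : SimpleGraph (V n)) : ℕ :=
  sInf { k | chainRel nniStepRel G k G' }

/-- `|N^k_NNI(T)|`. -/
def nniNbhdCard (n k : ℕ) (G : SimpleGraph (V n)) : ℕ :=
  ({ s : Set (Set (Set (Fin n))) |
      ∃ G' : SimpleGraph (V n), ubGraph n G' ∧ nniDist G G' = k ∧ s = splits G' }).ncard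

/-- SPR move with cut edge `c = {u,v}` (pruning the subtree containing `u`) and join edge
`j` (an edge of the component containing `v`); `a`, `b` are the other two neighbours of `v`;
the degree-two vertex `v` is suppressed and re-used to subdivide `j`.  If `j` is incident to
`v` the operation regrafts the subtree where it was, yielding the original tree. -/
def sprMoveOn {n : ℕ} (G : SimpleGraph (V n)) (c j : Sym2 (V n))
    (G' : SimpleGraph (V n)) : Prop :=
  ∃ u v a b : V n, c = s(u, v) ∧ G.Adj u v ∧ G.Adj v a ∧ G.Adj v b ∧
    a ≠ b ∧ a ≠ u ∧ b ≠ u ∧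
    j ∈ G.edgeSet ∧ j ≠ c ∧ (∀ w ∈ j, (G.deleteEdges {c}).Reachable v w) ∧
    ((∃ p q : V n, j = s(p, q) ∧ p ≠ v ∧ q ≠ v ∧
        G' = fromEdgeSet
          ((G.edgeSet \ {s(v, a), s(v, b), j}) ∪ {s(a, b), s(v, p), s(v, q)})) ∨
      (v ∈ j ∧ G' = G))

def sprMove {n : ℕ} (G G' : SimpleGraph (V n)) : Prop := ∃ c j, sprMoveOn G c j G'

def sprStepRel {n : ℕ} (G H : SimpleGraph (V n)) : Prop := sprMove G H ∨ sprMove H G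

def sprDist {n : ℕ} (G G' : SimpleGraph (V n)) : ℕ :=
  sInf { k | chainRel sprStepRel G k G' }

/-- `|N^k_SPR(T)|`. -/
def sprNbhdCard (n k : ℕ) (G : SimpleGraph (V n)) : ℕ :=
  ({ s : Set (Set (Set (Fin n))) |
      ∃ G' : SimpleGraph (V n), ubGraph n G' ∧ sprDist G G' = k ∧ s = splits G' }).ncard

/-- `v` is the root of a cherry: it is adjacent to two distinct leaves. -/
def cherryRoot {n : ℕ} (G : SimpleGraph (V n)) (v : V n) : Prop :=
  ∃ i j : Fin n, i ≠ j ∧ G.Adj (Sum.inl i) v ∧ G.Adj (Sum.inl j) v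

/-- Cherries, as unordered pairs of leaf labels with a common neighbour. -/
def cherrySet {n : ℕ} (G : SimpleGraph (V n)) : Set (Sym2 (Fin n)) :=
  { c | ∃ i j : Fin n, ∃ v : V n, i ≠ j ∧ c = s(i, j) ∧
      G.Adj (Sum.inl i) v ∧ G.Adj (Sum.inl j) v }

def cherryCount {n : ℕ} (G : SimpleGraph (V n)) : ℕ := (cherrySet G).ncard

/-- `P_k(T)`: the number of distinct (undirected) paths of length `k` in `G`, counted by
their edge sets. -/
def pathCount {n : ℕ} (G : SimpleGraph (V n)) (k : ℕ) : ℕ :=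
  ({ E : Set (Sym2 (V n)) | ∃ (u v : V n) (w : G.Walk u v),
      w.IsPath ∧ w.length = k ∧ E = { e | e ∈ w.edges } }).ncard

/-- `p_k(T)`: the number of internal paths of length `k` (all vertices internal). -/
def internalPathCount {n : ℕ} (G : SimpleGraph (V n)) (k : ℕ) : ℕ :=
  ({ E : Set (Sym2 (V n)) | ∃ (u v : V n) (w : G.Walk u v),
      w.IsPath ∧ w.length = k ∧ (∀ x ∈ w.support, isInternalV x) ∧
      E = { e | e ∈ w.edges } }).ncard

/-- `m_k(T)`: the number of paths of length `k` both of whose endpoints are leaves. -/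
def leafLeafPathCount {n : ℕ} (G : SimpleGraph (V n)) (k : ℕ) : ℕ :=
  ({ E : Set (Sym2 (V n)) | ∃ (u v : V n) (w : G.Walk u v),
      w.IsPath ∧ w.length = k ∧ isLeafV u ∧ isLeafV v ∧
      E = { e | e ∈ w.edges } }).ncard

/-- `h_k(T)`: the number of paths of length `k` exactly one of whose endpoints is a leaf. -/
def oneLeafPathCount {n : ℕ} (G : SimpleGraph (V n)) (k : ℕ) : ℕ :=
  ({ E : Set (Sym2 (V n)) | ∃ (u v : V n) (w : G.Walk u v),
      w.IsPath ∧ w.length = k ∧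
      ((isLeafV u ∧ ¬ isLeafV v) ∨ (¬ isLeafV u ∧ isLeafV v)) ∧
      E = { e | e ∈ w.edges } }).ncard

def isPathGraph {α : Type} (H : SimpleGraph α) : Prop :=
  H.Connected ∧ H.IsAcyclic ∧ ∀ v, (H.neighborSet v).ncard ≤ 2

/-- A caterpillar: the subgraph induced by the internal vertices is a path. -/
def isCaterpillar {n : ℕ} (G : SimpleGraph (V n)) : Prop :=
  isPathGraph (G.induce { v | isInternalV v })

/-- A balanced tree: all leaves are equidistant from a single vertex or a single edge. -/
def isBalanced {n : ℕ} (G : SimpleGraph (V n)) : Prop :=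
  (∃ (x : V n) (d : ℕ), ∀ i : Fin n, G.dist (Sum.inl i) x = d) ∨
  (∃ x y : V n, G.Adj x y ∧ ∃ d : ℕ,
    ∀ i : Fin n, min (G.dist (Sum.inl i) x) (G.dist (Sum.inl i) y) = d)

def leafNeighborCount {n : ℕ} (G : SimpleGraph (V n)) (v : V n) : ℕ :=
  ({ i : Fin n | G.Adj (Sum.inl i) v }).ncard

/-- A Type I tree with three cherries: the roots `a`, `b` of two cherries are adjacent to a
common internal vertex `x` (which is adjacent to no leaf), and every internal vertex other
than the three cherry roots and `x` is adjacent to exactly one leaf (so the remaining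
internal vertices lie on the path from `x` to the third cherry root `d`). -/
def typeI {n : ℕ} (G : SimpleGraph (V n)) : Prop :=
  cherryCount G = 3 ∧
  ∃ a b d x : V n, a ≠ b ∧ a ≠ d ∧ b ≠ d ∧
    cherryRoot G a ∧ cherryRoot G b ∧ cherryRoot G d ∧
    G.Adj x a ∧ G.Adj x b ∧ leafNeighborCount G x = 0 ∧
    ∀ w : V n, isInternalV w → w ≠ a → w ≠ b → w ≠ d → w ≠ x →
      leafNeighborCount G w = 1

/-- A Type II tree with `n = 3m` leaves and three cherries: a central internal vertex `c`
adjacent to no leaf, with the three cherry roots `a`, `b`, `d` each at distance `m - 1`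
from `c`, and every other internal vertex adjacent to exactly one leaf; equivalently, `c`
is adjacent to the roots of three pendant caterpillar subtrees each with `m` leaves. -/
def typeII {n : ℕ} (m : ℕ) (G : SimpleGraph (V n)) : Prop :=
  cherryCount G = 3 ∧
  ∃ a b d c : V n, a ≠ b ∧ a ≠ d ∧ b ≠ d ∧ c ≠ a ∧ c ≠ b ∧ c ≠ d ∧
    cherryRoot G a ∧ cherryRoot G b ∧ cherryRoot G d ∧
    leafNeighborCount G c = 0 ∧
    G.dist c a = m - 1 ∧ G.dist c b = m - 1 ∧ G.dist c d = m - 1 ∧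
    ∀ w : V n, isInternalV w → w ≠ a → w ≠ b → w ≠ d → w ≠ c →
      leafNeighborCount G w = 1

/-- `|UB(n,c)|`: the number of trees in `UB(n)` with exactly `c` cherries, counted up to
leaf-label-preserving isomorphism (by split sets). -/
def UBcount (n c : ℕ) : ℕ :=
  ({ s : Set (Set (Set (Fin n))) |
      ∃ G : SimpleGraph (V n), ubGraph n G ∧ cherryCount G = c ∧ s = splits G }).ncard

/-- `|UB(n)|`. -/
def UBtotal (n : ℕ) : ℕ :=
  ({ s : Set (Set (Set (Fin n))) |
      ∃ G : SimpleGraph (V n), ubGraph n G ∧ s = splits G }).ncard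

/-- The number of unordered pairs of distinct trees in `UB(n)` at NNI distance at most `k`. -/
def nniClosePairs (n k : ℕ) : ℕ :=
  ({ p : Sym2 (Set (Set (Set (Fin n)))) |
      ∃ G G' : SimpleGraph (V n), ubGraph n G ∧ ubGraph n G' ∧
        splits G ≠ splits G' ∧ nniDist G G' ≤ k ∧
        p = s(splits G, splits G') }).ncard

/-- The number of unordered pairs of distinct trees in `UB(n)` at RF distance at most `k`. -/
def rfClosePairs (n k : ℕ) : ℕ :=
  ({ p : Sym2 (Set (Set (Set (Fin n)))) |
      ∃ G G' : SimpleGraph (V n), ubGraph n G ∧ ubGraph n G' ∧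
        splits G ≠ splits G' ∧ rfDist G G' ≤ k ∧
        p = s(splits G, splits G') }).ncard

/-- `Δ(T, Σ_k)`: the number of trees in `UB(n)` containing all splits of `G` except
possibly those in `Sk`. -/
def Delta {n : ℕ} (G : SimpleGraph (V n)) (Sk : Set (Set (Set (Fin n)))) : ℕ :=
  ({ s : Set (Set (Set (Fin n))) | ∃ G' : SimpleGraph (V n),
      ubGraph n G' ∧ splits G \ Sk ⊆ splits G' ∧ s = splits G' }).ncard

/-- `Δ°(T, Σ_k)`: the number of trees in `UB(n)` containing the splits `Σ(T) \ Sk`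
and no other split of `G`. -/
def DeltaCirc {n : ℕ} (G : SimpleGraph (V n)) (Sk : Set (Set (Set (Fin n)))) : ℕ :=
  ({ s : Set (Set (Set (Fin n))) | ∃ G' : SimpleGraph (V n),
      ubGraph n G' ∧ splits G ∩ splits G' = splits G \ Sk ∧ s = splits G' }).ncard

/-- Isomorphism of the subgraphs formed by two edge sets. -/
def edgeSetIso {α β : Type} (E : Set (Sym2 α)) (E' : Set (Sym2 β)) : Prop :=
  ∃ φ : α → β, Set.InjOn φ { v | ∃ e ∈ E, v ∈ e } ∧
    (∀ x y : α, s(x, y) ∈ E → s(φ x, φ y) ∈ E') ∧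
    (∀ e' ∈ E', ∃ x y : α, s(x, y) ∈ E ∧ e' = s(φ x, φ y))

/-- The number of edges of `E` lying in the connected component `C` of the graph formed
by the edge set `E`. -/
def componentEdgeCount {α : Type} (E : Set (Sym2 α))
    (C : (fromEdgeSet E).ConnectedComponent) : ℕ :=
  ({ e ∈ E | ∃ v ∈ e, (fromEdgeSet E).connectedComponentMk v = C }).ncard

/-- `c_m`: the number of connected components with exactly `m` edges of the subgraph
formed by the edge set `E`. -/
def componentsWithEdges {α : Type} (E : Set (Sym2 α)) (m : ℕ) : ℕ :=
  ({ C : (fromEdgeSet E).ConnectedComponent | componentEdgeCount E C = m } :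
    Set ((fromEdgeSet E).ConnectedComponent)).ncard

/-- Sets of `k` distinct, pairwise non-adjacent internal edges of `G`. -/
def Aset (n k : ℕ) (G : SimpleGraph (V n)) : Set (Finset (Sym2 (V n))) :=
  { s | s.card = k ∧ (∀ e ∈ s, internalEdge G e) ∧
      ∀ e ∈ s, ∀ f ∈ s, e ≠ f → ¬ edgesShare e f }

/-- Sets of `k` distinct internal edges of `G` in which exactly one pair is adjacent. -/
def Bset (n k : ℕ) (G : SimpleGraph (V n)) : Set (Finset (Sym2 (V n))) :=
  { s | s.card = k ∧ (∀ e ∈ s, internalEdge G e) ∧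
      ∃ e ∈ s, ∃ f ∈ s, e ≠ f ∧ edgesShare e f ∧
        ∀ e' ∈ s, ∀ f' ∈ s, e' ≠ f' → edgesShare e' f' →
          (e' = e ∧ f' = f) ∨ (e' = f ∧ f' = e) }

/-- The label-preserving correspondence of edges under the NNI move swapping `z₁` and `z₃`
across `{x,y}`: the edge incident to the moved subtree keeps its label. -/
def nniRelabel {n : ℕ} (x y z₁ z₃ : V n) (f : Sym2 (V n)) : Sym2 (V n) :=
  if f = s(x, z₁) then s(y, z₁) else if f = s(y, z₃) then s(x, z₃) else f

/-- `NNI(T; e₁, …, e_k)`: the set of trees obtained by successive NNI operations on the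
listed edges (edge labels being carried along through each operation). -/
def nniSeq {n : ℕ} : SimpleGraph (V n) → List (Sym2 (V n)) → Set (SimpleGraph (V n))
  | G, [] => {G}
  | G, e :: es =>
    { H | ∃ x y z₁ z₃ G', e = s(x, y) ∧ nniMoveData G x y z₁ z₃ G' ∧
        H ∈ nniSeq G' (es.map (nniRelabel x y z₁ z₃)) }
termination_by G l => l.length
decreasing_by simp [List.length_map]

/-- The trees obtainable by NNI operations on the edges of `l` performed in any order. -/
def nniAnyOrder {n : ℕ} (G : SimpleGraph (V n)) (l : List (Sym2 (V n))) :
    Set (SimpleGraph (V n)) :=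
  { H | ∃ l' : List (Sym2 (V n)), l'.Perm l ∧ H ∈ nniSeq G l' }

/-- The distance in `G` between two edges. -/
def edgeDist {n : ℕ} (G : SimpleGraph (V n)) (e f : Sym2 (V n)) : ℕ :=
  sInf { d | ∃ x y, x ∈ e ∧ y ∈ f ∧ d = G.dist x y }

/-- `𝕋(T)`: tuples `(c₁, c₂, j₁, j₂)` where `c₁ ≠ j₁` are cut/join edges of a first SPR
operation on `G` and `c₂ ≠ j₂` are edges of the resulting tree. -/
def sprTuples {n : ℕ} (G : SimpleGraph (V n)) :
    Set (Sym2 (V n) × Sym2 (V n) × Sym2 (V n) × Sym2 (V n)) :=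
  { q | ∃ G' : SimpleGraph (V n), sprMoveOn G q.1 q.2.2.1 G' ∧
      q.2.1 ∈ G'.edgeSet ∧ q.2.2.2 ∈ G'.edgeSet ∧ q.2.1 ≠ q.2.2.2 }

/-- `𝕊(T)`: the subset of `𝕋(T)` where `c₂`, `j₂` are edges of `G` and the four edges are
pairwise at distance at least three in `G`. -/
def sprTuplesSep {n : ℕ} (G : SimpleGraph (V n)) :
    Set (Sym2 (V n) × Sym2 (V n) × Sym2 (V n) × Sym2 (V n)) :=
  { q | q ∈ sprTuples G ∧ q.2.1 ∈ G.edgeSet ∧ q.2.2.2 ∈ G.edgeSet ∧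
      List.Pairwise (fun e f => 3 ≤ edgeDist G e f) [q.1, q.2.1, q.2.2.1, q.2.2.2] }

/-- A (not necessarily binary) phylogenetic tree with `n` leaves: internal vertices have
degree at least three and the leaves are bijectively labelled by `Fin n`. -/
structure PhyloTree (n : ℕ) where
  Vt : Type
  [fintypeV : Fintype Vt]
  G : SimpleGraph Vt
  connected : G.Connected
  acyclic : G.IsAcyclic
  label : Fin n → Vt
  label_inj : Function.Injective label
  leaf_iff : ∀ v : Vt, (G.neighborSet v).ncard = 1 ↔ ∃ i, label i = v
  internal_deg : ∀ v : Vt, (¬ ∃ i, label i = v) → 3 ≤ (G.neighborSet v).ncard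

/-- `i₀`: the number of internal edges of a phylogenetic tree. -/
def internalEdgeCount {n : ℕ} (T : PhyloTree n) : ℕ :=
  ({ e ∈ T.G.edgeSet | ∀ v ∈ e, ¬ ∃ i, T.label i = v }).ncard

/-- The number of trees in `UB(n)` sharing at least `k` non-trivial splits with `T`. -/
def sharedCount (n k : ℕ) (T : PhyloTree n) : ℕ :=
  ({ s : Set (Set (Set (Fin n))) | ∃ G : SimpleGraph (V n),
      ubGraph n G ∧ k ≤ (splits G ∩ splitsL T.G T.label).ncard ∧ s = splits G }).ncard

end Phylo

namespace Phylo

variable {n : ℕ}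

instance vMemDec {n : ℕ} (z : V n) (l : List (V n)) : Decidable (z ∈ l) :=
  decidable_of_iff (∃ x ∈ l, x = z) (by simp)

lemma not_leafV_iff {v : V n} : ¬ isLeafV v ↔ isInternalV v := by
  cases v with
  | inl i => simp [isLeafV, isInternalV]
  | inr j => simp [isLeafV, isInternalV]

lemma not_internalV_iff {v : V n} : ¬ isInternalV v ↔ isLeafV v := by
  cases v with
  | inl i => simp [isLeafV, isInternalV]
  | inr j => simp [isLeafV, isInternalV]

variable {G : SimpleGraph (V n)}

lemma deg_leaf (hG : ubGraph n G) {v : V n} (h : isLeafV v) :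
    (G.neighborSet v).ncard = 1 := by
  obtain ⟨i, rfl⟩ := h; exact hG.2.2.1 i

lemma deg_int (hG : ubGraph n G) {v : V n} (h : isInternalV v) :
    (G.neighborSet v).ncard = 3 := by
  obtain ⟨j, rfl⟩ := h; exact hG.2.2.2 j

lemma internal_of_two_nbrs (hG : ubGraph n G) {v a b : V n} (hab : a ≠ b)
    (ha : G.Adj v a) (hb : G.Adj v b) : isInternalV v := by
  by_contra h
  rw [not_internalV_iff] at h
  have h1 := deg_leaf hG h
  have h2 : ({a, b} : Set (V n)).ncard ≤ (G.neighborSet v).ncard :=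
    Set.ncard_le_ncard (by rintro x (rfl | rfl) <;> simpa) (Set.toFinite _)
  rw [Set.ncard_pair hab, h1] at h2
  omega

/-- edge set of a walk, as a set -/
def ew {u v : V n} (w : G.Walk u v) : Set (Sym2 (V n)) := {e | e ∈ w.edges}

/-- number of edges of `E` containing `z` -/
def cnt (E : Set (Sym2 (V n))) (z : V n) : ℕ := ({e ∈ E | z ∈ e}).ncard

open scoped Classical in
lemma cnt_list {u v : V n} (w : G.Walk u v) (hw : w.IsPath) (z : V n) :
    cnt (ew w) z = w.edges.countP (fun e => decide (z ∈ e)) := by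
  classical
  have hnd : w.edges.Nodup := hw.isTrail.edges_nodup
  have hset : {e ∈ ew w | z ∈ e} = ↑((w.edges.filter (fun e => decide (z ∈ e))).toFinset) := by
    ext e; simp [ew, List.mem_filter]
  rw [cnt, hset, Set.ncard_coe_finset, List.toFinset_card_of_nodup (hnd.filter _),
      List.countP_eq_length_filter]

open scoped Classical in
lemma countP_path {u v : V n} (w : G.Walk u v) : w.IsPath → u ≠ v → ∀ z : V n,
    w.edges.countP (fun e => decide (z ∈ e)) =
      if z = u ∨ z = v then 1 else if z ∈ w.support then 2 else 0 := by
  induction w with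
  | nil => exact fun _ hne _ => absurd rfl hne
  | @cons u b v h q ih =>
    intro hw hne z
    have hq : q.IsPath := hw.of_cons
    have hus : u ∉ q.support := ((Walk.cons_isPath_iff h q).mp hw).2
    have hub : u ≠ b := fun e => hus (e ▸ q.start_mem_support)
    rw [Walk.edges_cons, List.countP_cons, Walk.support_cons]
    by_cases hbv : b = v
    · subst hbv
      have hqe : q = Walk.nil := Walk.isPath_iff_eq_nil.mp hq
      subst hqe
      by_cases hz : z = u ∨ z = b <;>
        simp [hz, Sym2.mem_iff, List.mem_cons]
    · have ihq := ih hq hbv z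
      rw [ihq]
      by_cases hzu : z = u
      · subst hzu
        simp [hub, hne, hus, Sym2.mem_iff]
      · by_cases hzb : z = b
        · subst hzb
          simp [hzu, hbv, Sym2.mem_iff, q.start_mem_support, Ne.symm hzu]
        · by_cases hzv : z = v
          · subst hzv
            simp [hzu, hzb, Sym2.mem_iff, Ne.symm hbv]
          · simp [hzu, hzb, hzv, Sym2.mem_iff, List.mem_cons]

lemma cnt_path {u v : V n} (w : G.Walk u v) (hw : w.IsPath) (hne : u ≠ v) (z : V n) :
    cnt (ew w) z = if z = u ∨ z = v then 1 else if z ∈ w.support then 2 else 0 := by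
  classical
  rw [cnt_list w hw z, countP_path w hw hne z]


lemma path_ne {u v : V n} {w : G.Walk u v} (hw : w.IsPath) (hk : 1 ≤ w.length) : u ≠ v := by
  rintro rfl
  rw [Walk.isPath_iff_eq_nil] at hw
  subst hw
  simp at hk

lemma ends_spec {u v : V n} (w : G.Walk u v) (hw : w.IsPath) (hne : u ≠ v) :
    {z | cnt (ew w) z = 1} = {u, v} := by
  ext z
  rw [Set.mem_setOf_eq, cnt_path w hw hne z]
  by_cases h : z = u ∨ z = v
  · simp only [h, if_true]
    simpa using h
  · push_neg at h
    by_cases hs : z ∈ w.support <;>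
      simp [h.1, h.2, hs]

lemma supp_spec {u v : V n} (w : G.Walk u v) (hw : w.IsPath) (hne : u ≠ v) :
    {z | ∃ e ∈ ew w, z ∈ e} = {z | z ∈ w.support} := by
  ext z
  simp only [Set.mem_setOf_eq]
  constructor
  · rintro ⟨e, he, hz⟩
    induction e with
    | _ a b =>
      rcases Sym2.mem_iff.mp hz with rfl | rfl
      · exact w.fst_mem_support_of_mem_edges he
      · exact w.snd_mem_support_of_mem_edges he
  · intro hz
    have hc := cnt_path w hw hne z
    have hpos : cnt (ew w) z ≠ 0 := by
      rw [hc]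
      split_ifs with h1 h2 <;> simp_all
    obtain ⟨e, he⟩ := Set.nonempty_of_ncard_ne_zero hpos
    exact ⟨e, he.1, he.2⟩

lemma interior_internal (hG : ubGraph n G) {u v : V n} (w : G.Walk u v) :
    w.IsPath → ∀ z ∈ w.support, z ≠ u → z ≠ v → isInternalV z := by
  induction w with
  | nil =>
    intro _ z hz hzu _
    rw [Walk.support_nil, List.mem_singleton] at hz
    exact absurd hz hzu
  | @cons u b v h q ih =>
    intro hw z hz hzu hzv
    rw [Walk.support_cons, List.mem_cons] at hz
    rcases hz with rfl | hz
    · exact absurd rfl hzu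
    by_cases hzb : z = b
    · subst hzb
      cases q with
      | nil => exact absurd rfl hzv
      | @cons b c v h' q' =>
        refine internal_of_two_nbrs hG (a := u) ?_ h.symm h'
        intro he
        refine ((Walk.cons_isPath_iff h _).mp hw).2 ?_
        rw [he, Walk.support_cons]
        exact List.mem_cons_of_mem _ q'.start_mem_support
    · exact ih hw.of_cons z hz hzb hzv

lemma path_unique (hG : ubGraph n G) {u v : V n} (p q : G.Walk u v)
    (hp : p.IsPath) (hq : q.IsPath) : p = q :=
  congrArg Subtype.val ((isAcyclic_iff_path_unique.mp hG.2.1) ⟨p, hp⟩ ⟨q, hq⟩)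

lemma single_edge_isPath {x a : V n} (ha : G.Adj x a) :
    (Walk.cons ha Walk.nil : G.Walk x a).IsPath := by
  simp [Walk.isPath_def, ha.ne]

lemma edge_of_nbr_mem_support (hG : ubGraph n G) {x v a : V n} (w : G.Walk x v)
    (hw : w.IsPath) (ha : G.Adj x a) (hmem : a ∈ w.support) : s(x, a) ∈ w.edges := by
  classical
  have h1 : (w.takeUntil a hmem).IsPath := hw.takeUntil hmem
  have heq := path_unique hG _ _ h1 (single_edge_isPath ha)
  have he : s(x, a) ∈ (w.takeUntil a hmem).edges := by rw [heq]; simp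
  exact w.edges_takeUntil_subset hmem he

lemma nbr_support_unique (hG : ubGraph n G) {x v : V n} (w : G.Walk x v)
    (hw : w.IsPath) (hne : x ≠ v) : {a | G.Adj x a ∧ a ∈ w.support}.ncard = 1 := by
  cases w with
  | nil => exact absurd rfl hne
  | @cons x b v h q =>
    rw [Set.ncard_eq_one]
    refine ⟨b, ?_⟩
    ext a
    simp only [Set.mem_setOf_eq, Set.mem_singleton_iff]
    constructor
    · rintro ⟨ha, hmem⟩
      have he1 : s(x, a) ∈ (Walk.cons h q).edges := edge_of_nbr_mem_support hG _ hw ha hmem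
      have he2 : s(x, b) ∈ (Walk.cons h q).edges := by simp
      have hcnt : cnt (ew (Walk.cons h q)) x = 1 := by
        rw [cnt_path _ hw hne x]; simp
      obtain ⟨e, hee⟩ := Set.ncard_eq_one.mp hcnt
      have hh1 : s(x, a) ∈ ({e} : Set (Sym2 (V n))) := hee ▸ ⟨he1, by simp⟩
      have hh2 : s(x, b) ∈ ({e} : Set (Sym2 (V n))) := hee ▸ ⟨he2, by simp⟩
      rw [Set.mem_singleton_iff] at hh1 hh2
      exact Sym2.congr_right.mp (hh1.trans hh2.symm)
    · rintro rfl
      exact ⟨h, by simp⟩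

lemma ext_nbrs (hG : ubGraph n G) {x v : V n} (w : G.Walk x v) (hw : w.IsPath)
    (hne : x ≠ v) (hx : isInternalV x) :
    {a | G.Adj x a ∧ a ∉ w.support}.ncard = 2 := by
  have hN := deg_int hG hx
  have h1 := nbr_support_unique hG w hw hne
  have hsub : {a | G.Adj x a ∧ a ∈ w.support} ⊆ G.neighborSet x := fun a ha => ha.1
  have hdecomp : {a | G.Adj x a ∧ a ∉ w.support} =
      G.neighborSet x \ {a | G.Adj x a ∧ a ∈ w.support} := by
    ext a
    simp only [Set.mem_setOf_eq, Set.mem_diff, mem_neighborSet]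
    tauto
  rw [hdecomp, Set.ncard_diff hsub (Set.toFinite _), hN, h1]
/-- remove the two pendant edges of a path's edge set -/
def Trim (E : Set (Sym2 (V n))) : Set (Sym2 (V n)) :=
  {e ∈ E | ∀ z ∈ e, cnt E z ≠ 1}

lemma mem_supp_of_mem_ew {u v z : V n} {w : G.Walk u v} {e : Sym2 (V n)}
    (he : e ∈ ew w) (hz : z ∈ e) : z ∈ w.support := by
  induction e with
  | _ a b =>
    rcases Sym2.mem_iff.mp hz with rfl | rfl
    · exact w.fst_mem_support_of_mem_edges he
    · exact w.snd_mem_support_of_mem_edges he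

lemma trim_eq {u v : V n} (w : G.Walk u v) (hw : w.IsPath) (hne : u ≠ v) :
    Trim (ew w) = {e ∈ ew w | u ∉ e ∧ v ∉ e} := by
  have hends : ∀ z : V n, cnt (ew w) z = 1 ↔ (z = u ∨ z = v) := by
    intro z
    have := ends_spec w hw hne
    constructor
    · intro h
      have : z ∈ ({u, v} : Set (V n)) := this ▸ h
      simpa using this
    · rintro (rfl | rfl)
      · rw [cnt_path w hw hne]; simp
      · rw [cnt_path w hw hne]; simp
  ext e
  simp only [Trim, Set.mem_setOf_eq]
  refine and_congr_right fun he => ?_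
  constructor
  · intro h
    exact ⟨fun hu => h u hu ((hends u).mpr (Or.inl rfl)),
           fun hv => h v hv ((hends v).mpr (Or.inr rfl))⟩
  · rintro ⟨hu, hv⟩ z hz h1
    rcases (hends z).mp h1 with rfl | rfl
    · exact hu hz
    · exact hv hz

lemma decomp {u v : V n} (w : G.Walk u v) (hw : w.IsPath) (hk : 2 ≤ w.length) :
    ∃ (x y : V n) (_ : G.Adj u x) (_ : G.Adj y v) (m : G.Walk x y),
      m.IsPath ∧ w.length = m.length + 2 ∧ u ∉ m.support ∧ v ∉ m.support ∧
      w.support = u :: (m.support ++ [v]) ∧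
      w.edges = s(u, x) :: (m.edges ++ [s(y, v)]) := by
  cases w with
  | nil => simp at hk
  | @cons u x v h q =>
    have hq1 : 1 ≤ q.length := by
      rw [Walk.length_cons] at hk; omega
    cases q with
    | nil => simp at hq1
    | @cons x b v h₂ q₂ =>
      obtain ⟨y, m, h', hqe⟩ := Walk.exists_cons_eq_concat h₂ q₂
      have hw' : (Walk.cons h (m.concat h')).IsPath := by rwa [hqe] at hw
      have hmc : (m.concat h').IsPath := hw'.of_cons
      have hmp : m.IsPath := by
        rw [Walk.concat_eq_append] at hmc
        exact hmc.of_append_left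
      have hu : u ∉ (m.concat h').support := ((Walk.cons_isPath_iff h _).mp hw').2
      rw [Walk.support_concat, List.mem_append] at hu
      push_neg at hu
      have hvm : v ∉ m.support := by
        have := hmc.support_nodup
        rw [Walk.support_concat] at this
        have := List.disjoint_of_nodup_append this
        intro hv
        exact this hv (by simp)
      refine ⟨x, y, h, h', m, hmp, ?_, hu.1, hvm, ?_, ?_⟩
      · rw [hqe, Walk.length_cons, Walk.length_concat]
      · rw [hqe, Walk.support_cons, Walk.support_concat]
      · rw [hqe, Walk.edges_cons, Walk.edges_concat, List.concat_eq_append]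

lemma trim_path {u v : V n} (w : G.Walk u v) (hw : w.IsPath) (hk : 2 ≤ w.length) :
    ∃ (x y : V n) (_ : G.Adj u x) (_ : G.Adj y v) (m : G.Walk x y),
      m.IsPath ∧ w.length = m.length + 2 ∧ u ∉ m.support ∧ v ∉ m.support ∧
      (∀ z ∈ m.support, z ∈ w.support ∧ z ≠ u ∧ z ≠ v) ∧
      Trim (ew w) = ew m ∧ ew w = insert s(u, x) (insert s(y, v) (ew m)) := by
  obtain ⟨x, y, hux, hyv, m, hm, hlen, hum, hvm, hsupp, hedg⟩ := decomp w hw hk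
  have hne : u ≠ v := path_ne hw (by omega)
  have hmemw : ∀ z ∈ m.support, z ∈ w.support ∧ z ≠ u ∧ z ≠ v := by
    intro z hz
    refine ⟨?_, fun h => hum (h ▸ hz), fun h => hvm (h ▸ hz)⟩
    rw [hsupp]
    simp only [List.mem_cons, List.mem_append, List.mem_singleton]
    tauto
  have hewd : ew w = insert s(u, x) (insert s(y, v) (ew m)) := by
    ext e
    simp only [ew, Set.mem_setOf_eq, hedg, List.mem_cons, List.mem_append,
      List.mem_singleton, Set.mem_insert_iff]
    tauto
  refine ⟨x, y, hux, hyv, m, hm, hlen, hum, hvm, hmemw, ?_, hewd⟩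
  rw [trim_eq w hw hne, hewd]
  ext e
  simp only [Set.mem_setOf_eq, Set.mem_insert_iff]
  constructor
  · rintro ⟨(rfl | rfl | he), hu, hv⟩
    · exact absurd (Sym2.mem_mk_left u x) hu
    · exact absurd (Sym2.mem_mk_right y v) hv
    · exact he
  · intro he
    refine ⟨Or.inr (Or.inr he), fun hu => hum ?_, fun hv => hvm ?_⟩
    · exact mem_supp_of_mem_ew he hu
    · exact mem_supp_of_mem_ew he hv

/-- paths of length `k` with endpoint condition `Q`, recorded by edge sets -/
def ES (G : SimpleGraph (V n)) (k : ℕ) (Q : V n → V n → Prop) : Set (Set (Sym2 (V n))) :=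
  { E | ∃ (u v : V n) (w : G.Walk u v), w.IsPath ∧ w.length = k ∧ Q u v ∧ E = ew w }

lemma ES_finite (G : SimpleGraph (V n)) (k : ℕ) (Q : V n → V n → Prop) :
    (ES G k Q).Finite := Set.toFinite _

lemma ends_eq {u v u' v' : V n} {w : G.Walk u v} {w' : G.Walk u' v'} (hw : w.IsPath)
    (hw' : w'.IsPath) (hk : 1 ≤ w.length) (hk' : 1 ≤ w'.length) (h : ew w = ew w') :
    (u' = u ∧ v' = v) ∨ (u' = v ∧ v' = u) := by
  have hne := path_ne hw hk
  have hne' := path_ne hw' hk'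
  have hse : ({u, v} : Set (V n)) = {u', v'} := by
    rw [← ends_spec w hw hne, ← ends_spec w' hw' hne', h]
  have h1 : u' ∈ ({u, v} : Set (V n)) := by rw [hse]; simp
  have h2 : v' ∈ ({u, v} : Set (V n)) := by rw [hse]; simp
  simp only [Set.mem_insert_iff, Set.mem_singleton_iff] at h1 h2
  rcases h1 with rfl | rfl <;> rcases h2 with rfl | rfl <;> tauto

lemma ES_mono {G : SimpleGraph (V n)} {k : ℕ} {Q₁ Q₂ : V n → V n → Prop}
    (h : ∀ u v, Q₁ u v → Q₂ u v) : ES G k Q₁ ⊆ ES G k Q₂ := by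
  rintro E ⟨u, v, w, hw, hl, hq, rfl⟩
  exact ⟨u, v, w, hw, hl, h u v hq, rfl⟩

lemma ES_disjoint {G : SimpleGraph (V n)} {k : ℕ} {Q₁ Q₂ : V n → V n → Prop} (hk : 1 ≤ k)
    (hQ : ∀ u v, Q₁ u v → Q₂ u v ∨ Q₂ v u → False) :
    Disjoint (ES G k Q₁) (ES G k Q₂) := by
  rw [Set.disjoint_left]
  rintro E ⟨u, v, w, hw, hl, hq, rfl⟩ ⟨u', v', w', hw', hl', hq', he⟩
  rcases ends_eq hw hw' (by omega) (by omega) he with ⟨rfl, rfl⟩ | ⟨rfl, rfl⟩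
  · exact hQ _ _ hq (Or.inl hq')
  · exact hQ _ _ hq (Or.inr hq')

lemma ES_partition (hG : ubGraph n G) {k : ℕ} (hk : 1 ≤ k) :
    (ES G k fun _ _ => True).ncard =
      (ES G k fun u v => isInternalV u ∧ isInternalV v).ncard +
      ((ES G k fun u v => (isLeafV u ∧ ¬isLeafV v) ∨ (¬isLeafV u ∧ isLeafV v)).ncard +
       (ES G k fun u v => isLeafV u ∧ isLeafV v).ncard) := by
  set A := ES G k fun u v => isInternalV u ∧ isInternalV v with hA
  set B := ES G k fun u v => (isLeafV u ∧ ¬isLeafV v) ∨ (¬isLeafV u ∧ isLeafV v) with hB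
  set C := ES G k fun u v => isLeafV u ∧ isLeafV v with hC
  have huni : (ES G k fun _ _ => True) = A ∪ (B ∪ C) := by
    apply Set.Subset.antisymm
    · rintro E ⟨u, v, w, hw, hl, -, rfl⟩
      by_cases hu : isLeafV u <;> by_cases hv : isLeafV v
      · exact Or.inr (Or.inr ⟨u, v, w, hw, hl, ⟨hu, hv⟩, rfl⟩)
      · exact Or.inr (Or.inl ⟨u, v, w, hw, hl, Or.inl ⟨hu, hv⟩, rfl⟩)
      · exact Or.inr (Or.inl ⟨u, v, w, hw, hl, Or.inr ⟨hu, hv⟩, rfl⟩)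
      · exact Or.inl ⟨u, v, w, hw, hl,
          ⟨not_leafV_iff.mp hu, not_leafV_iff.mp hv⟩, rfl⟩
    · refine Set.union_subset (ES_mono fun _ _ _ => trivial)
        (Set.union_subset (ES_mono fun _ _ _ => trivial) (ES_mono fun _ _ _ => trivial))
  have hdBC : Disjoint B C := by
    refine ES_disjoint hk fun u v hq hq' => ?_
    rcases hq with ⟨h1, h2⟩ | ⟨h1, h2⟩ <;> rcases hq' with ⟨h3, h4⟩ | ⟨h3, h4⟩ <;> tauto
  have hdABC : Disjoint A (B ∪ C) := by
    refine Set.disjoint_union_right.mpr ⟨?_, ?_⟩ <;>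
    · refine ES_disjoint hk fun u v hq hq' => ?_
      have hu := not_leafV_iff.mpr hq.1
      have hv := not_leafV_iff.mpr hq.2
      tauto
  rw [huni, Set.ncard_union_eq hdABC (Set.toFinite _) (Set.toFinite _),
    Set.ncard_union_eq hdBC (Set.toFinite _) (Set.toFinite _)]

lemma ext_path (hG : ubGraph n G) {x y a b : V n} (m : G.Walk x y) (hm : m.IsPath)
    (hk : 1 ≤ m.length) (ha : G.Adj x a) (hb : G.Adj y b)
    (has : a ∉ m.support) (hbs : b ∉ m.support) :
    ∃ w : G.Walk a b, w.IsPath ∧ w.length = m.length + 2 ∧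
      ew w = insert s(x, a) (insert s(y, b) (ew m)) := by
  have hab : a ≠ b := by
    rintro rfl
    have h1 : (Walk.cons ha.symm m).IsPath := hm.cons has
    have heq := path_unique hG _ _ h1 (single_edge_isPath hb.symm)
    have := congrArg Walk.length heq
    simp only [Walk.length_cons, Walk.length_nil] at this
    omega
  have hcp : (m.concat hb).IsPath := by
    rw [← Walk.isPath_reverse_iff, Walk.reverse_concat]
    exact (hm.reverse).cons (by simpa [Walk.support_reverse] using hbs)
  have hw : (Walk.cons ha.symm (m.concat hb)).IsPath := by
    refine hcp.cons ?_
    rw [Walk.support_concat, List.mem_append]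
    push_neg
    exact ⟨has, by simpa using hab⟩
  refine ⟨_, hw, ?_, ?_⟩
  · rw [Walk.length_cons, Walk.length_concat]
  · ext e
    simp only [ew, Set.mem_setOf_eq, Walk.edges_cons, Walk.edges_concat,
      List.concat_eq_append, List.mem_cons, List.mem_append, List.mem_singleton,
      List.not_mem_nil, or_false, Set.mem_insert_iff]
    rw [Sym2.eq_swap (a := a) (b := x)]
    tauto

lemma fiber_eq (hG : ubGraph n G) {k : ℕ} (hk : 3 ≤ k) {x y : V n} (m : G.Walk x y)
    (hm : m.IsPath) (hml : m.length = k - 2) :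
    {E ∈ ES G k fun _ _ => True | Trim E = ew m} =
      (fun p : V n × V n => insert s(x, p.1) (insert s(y, p.2) (ew m))) ''
        ({a | G.Adj x a ∧ a ∉ m.support} ×ˢ {b | G.Adj y b ∧ b ∉ m.support}) := by
  have hml1 : 1 ≤ m.length := by omega
  ext E
  simp only [Set.mem_setOf_eq, Set.mem_image, Set.mem_prod, Prod.exists]
  constructor
  · rintro ⟨⟨u, v, w, hw, hl, -, rfl⟩, htrim⟩
    obtain ⟨x', y', hux, hyv, m', hm', hlen, hum, hvm, hsupp, htr, hewd⟩ :=
      trim_path w hw (by omega)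
    rw [htr] at htrim
    have hm'l : 1 ≤ m'.length := by omega
    have hsupp_eq : ∀ z : V n, z ∈ m'.support ↔ z ∈ m.support := by
      intro z
      have h1 := supp_spec m' hm' (path_ne hm' hm'l)
      have h2 := supp_spec m hm (path_ne hm hml1)
      constructor
      · intro h
        have : z ∈ {z : V n | ∃ e ∈ ew m', z ∈ e} := h1 ▸ h
        rw [htrim] at this
        exact (h2 ▸ this : z ∈ {z : V n | z ∈ m.support})
      · intro h
        have : z ∈ {z : V n | ∃ e ∈ ew m, z ∈ e} := h2 ▸ h
        rw [← htrim] at this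
        exact (h1 ▸ this : z ∈ {z : V n | z ∈ m'.support})
    have husup : u ∉ m.support := fun h => hum ((hsupp_eq u).mpr h)
    have hvsup : v ∉ m.support := fun h => hvm ((hsupp_eq v).mpr h)
    rcases ends_eq hm hm' hml1 hm'l htrim.symm with ⟨rfl, rfl⟩ | ⟨rfl, rfl⟩
    · refine ⟨u, v, ⟨⟨hux.symm, husup⟩, ⟨hyv, hvsup⟩⟩, ?_⟩
      rw [hewd, htrim, Sym2.eq_swap (a := x') (b := u)]
    · refine ⟨v, u, ⟨⟨hyv, hvsup⟩, ⟨hux.symm, husup⟩⟩, ?_⟩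
      rw [hewd, htrim, Sym2.eq_swap (a := x') (b := u),
        Sym2.eq_swap (a := y') (b := v)]
      exact Set.insert_comm _ _ _
  · rintro ⟨a, b, ⟨⟨ha, has⟩, ⟨hb, hbs⟩⟩, rfl⟩
    obtain ⟨w, hw, hwl, hew⟩ := ext_path hG m hm hml1 ha hb has hbs
    have hwl' : w.length = k := by omega
    refine ⟨⟨a, b, w, hw, hwl', trivial, hew.symm⟩, ?_⟩
    have hab : a ≠ b := path_ne hw (by omega)
    rw [← hew, trim_eq w hw hab, hew]
    ext e
    simp only [Set.mem_setOf_eq, Set.mem_insert_iff]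
    constructor
    · rintro ⟨(rfl | rfl | he), hna, hnb⟩
      · exact absurd (Sym2.mem_mk_right x a) hna
      · exact absurd (Sym2.mem_mk_right y b) hnb
      · exact he
    · intro he
      exact ⟨Or.inr (Or.inr he), fun hmem => has (mem_supp_of_mem_ew he hmem),
        fun hmem => hbs (mem_supp_of_mem_ew he hmem)⟩

lemma ncard_prod_pair {α β : Type*} {a₁ a₂ : α} {b₁ b₂ : β} (ha : a₁ ≠ a₂) (hb : b₁ ≠ b₂) :
    (({a₁, a₂} : Set α) ×ˢ ({b₁, b₂} : Set β)).ncard = 4 := by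
  have hset : ({a₁, a₂} : Set α) ×ˢ ({b₁, b₂} : Set β) =
      {(a₁, b₁), (a₁, b₂), (a₂, b₁), (a₂, b₂)} := by
    ext ⟨p, q⟩
    simp only [Set.mem_prod, Set.mem_insert_iff, Set.mem_singleton_iff, Prod.mk.injEq]
    tauto
  rw [hset]
  rw [Set.ncard_insert_of_notMem (by simp [Prod.ext_iff, ha, hb]) (Set.toFinite _),
    Set.ncard_insert_of_notMem (by simp [Prod.ext_iff, ha, hb]) (Set.toFinite _),
    Set.ncard_insert_of_notMem (by simp [Prod.ext_iff, ha, hb]) (Set.toFinite _),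
    Set.ncard_singleton]

lemma card_ES_top (hG : ubGraph n G) {k : ℕ} (hk : 3 ≤ k) :
    (ES G k fun _ _ => True).ncard =
      4 * (ES G (k - 2) fun u v => isInternalV u ∧ isInternalV v).ncard := by
  classical
  have hTfin : (ES G k fun _ _ => True).Finite := Set.toFinite _
  have hIfin : (ES G (k - 2) fun u v => isInternalV u ∧ isInternalV v).Finite :=
    Set.toFinite _
  have hmap : ∀ E ∈ hTfin.toFinset, Trim E ∈ hIfin.toFinset := by
    intro E hE
    rw [Set.Finite.mem_toFinset] at hE ⊢
    obtain ⟨u, v, w, hw, hl, -, rfl⟩ := hE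
    obtain ⟨x', y', hux, hyv, m', hm', hlen, hum, hvm, hsupp, htr, hewd⟩ :=
      trim_path w hw (by omega)
    have hint : ∀ z ∈ m'.support, isInternalV z := by
      intro z hz
      obtain ⟨h1, h2, h3⟩ := hsupp z hz
      exact interior_internal hG w hw z h1 h2 h3
    exact ⟨x', y', m', hm', by omega,
      ⟨hint _ m'.start_mem_support, hint _ m'.end_mem_support⟩, htr⟩
  have hcard := Finset.card_eq_sum_card_fiberwise hmap
  have hfib : ∀ E' ∈ hIfin.toFinset,
      (hTfin.toFinset.filter (fun E => Trim E = E')).card = 4 := by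
    intro E' hE'
    rw [Set.Finite.mem_toFinset] at hE'
    obtain ⟨x, y, m, hm, hml, ⟨hxint, hyint⟩, rfl⟩ := hE'
    have hml1 : 1 ≤ m.length := by omega
    have hxy : x ≠ y := path_ne hm hml1
    have hset : ↑(hTfin.toFinset.filter (fun E => Trim E = ew m)) =
        (fun p : V n × V n => insert s(x, p.1) (insert s(y, p.2) (ew m))) ''
          ({a | G.Adj x a ∧ a ∉ m.support} ×ˢ {b | G.Adj y b ∧ b ∉ m.support}) := by
      rw [Finset.coe_filter, ← fiber_eq hG hk m hm hml]
      ext E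
      simp only [Set.mem_setOf_eq, Set.Finite.mem_toFinset]
    have hinj : Set.InjOn (fun p : V n × V n => insert s(x, p.1) (insert s(y, p.2) (ew m)))
        ({a | G.Adj x a ∧ a ∉ m.support} ×ˢ {b | G.Adj y b ∧ b ∉ m.support}) := by
      rintro ⟨a, b⟩ ⟨⟨ha, has⟩, hb, hbs⟩ ⟨a', b'⟩ ⟨⟨ha', has'⟩, hb', hbs'⟩ heq
      simp only at heq
      have haa : a = a' := by
        have hmem : s(x, a) ∈ insert s(x, a') (insert s(y, b') (ew m)) := by
          rw [← heq]; exact Set.mem_insert _ _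
        rcases hmem with h | h | h
        · exact Sym2.congr_right.mp h
        · rcases Sym2.eq_iff.mp h with ⟨h1, -⟩ | ⟨h1, -⟩
          · exact absurd h1 hxy
          · exact absurd (h1 ▸ m.start_mem_support) hbs'
        · exact absurd (mem_supp_of_mem_ew h (Sym2.mem_mk_right x a)) has
      have hbb : b = b' := by
        have hmem : s(y, b) ∈ insert s(x, a') (insert s(y, b') (ew m)) := by
          rw [← heq]; exact Set.mem_insert_of_mem _ (Set.mem_insert _ _)
        rcases hmem with h | h | h
        · rcases Sym2.eq_iff.mp h with ⟨h1, -⟩ | ⟨h1, -⟩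
          · exact absurd h1 hxy.symm
          · exact absurd (h1 ▸ m.end_mem_support) has'
        · exact Sym2.congr_right.mp h
        · exact absurd (mem_supp_of_mem_ew h (Sym2.mem_mk_right y b)) hbs
      rw [Prod.ext_iff]
      exact ⟨haa, hbb⟩
    have hSX : {a | G.Adj x a ∧ a ∉ m.support}.ncard = 2 :=
      ext_nbrs hG m hm hxy hxint
    have hSY : {b | G.Adj y b ∧ b ∉ m.support}.ncard = 2 := by
      have := ext_nbrs hG m.reverse hm.reverse hxy.symm hyint
      simpa [Walk.support_reverse] using this
    obtain ⟨a₁, a₂, haa, hax⟩ := Set.ncard_eq_two.mp hSX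
    obtain ⟨b₁, b₂, hbb, hby⟩ := Set.ncard_eq_two.mp hSY
    have : (hTfin.toFinset.filter (fun E => Trim E = ew m)).card =
        ((fun p : V n × V n => insert s(x, p.1) (insert s(y, p.2) (ew m))) ''
          ({a | G.Adj x a ∧ a ∉ m.support} ×ˢ {b | G.Adj y b ∧ b ∉ m.support})).ncard := by
      rw [← hset, Set.ncard_coe_finset]
    rw [this, Set.ncard_image_of_injOn hinj, hax, hby, ncard_prod_pair haa hbb]
  rw [Finset.sum_congr rfl hfib, Finset.sum_const, smul_eq_mul] at hcard
  have h1 : (ES G k fun _ _ => True).ncard = hTfin.toFinset.card := by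
    rw [← Set.ncard_coe_finset, Set.Finite.coe_toFinset]
  have h2 : (ES G (k - 2) fun u v => isInternalV u ∧ isInternalV v).ncard =
      hIfin.toFinset.card := by
    rw [← Set.ncard_coe_finset, Set.Finite.coe_toFinset]
  rw [h1, h2, hcard, Nat.mul_comm]

lemma nbr_eq_of_leaf (hG : ubGraph n G) {u a b : V n} (hu : isLeafV u)
    (ha : G.Adj u a) (hb : G.Adj u b) : a = b := by
  obtain ⟨c, hc⟩ := Set.ncard_eq_one.mp (deg_leaf hG hu)
  have h1 : a ∈ ({c} : Set (V n)) := hc ▸ ha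
  have h2 : b ∈ ({c} : Set (V n)) := hc ▸ hb
  rw [Set.mem_singleton_iff] at h1 h2
  rw [h1, h2]

lemma leaf_adj_internal (hn : 4 ≤ n) (hG : ubGraph n G) {u t : V n}
    (hu : isLeafV u) (hadj : G.Adj u t) : isInternalV t := by
  by_contra h
  have ht : isLeafV t := not_internalV_iff.mp h
  have hne : t ≠ (Sum.inr ⟨0, by omega⟩ : V n) := by
    obtain ⟨i, rfl⟩ := ht
    simp
  obtain ⟨p0⟩ := hG.1.preconnected t (Sum.inr ⟨0, by omega⟩)
  have hp : p0.bypass.IsPath := Walk.bypass_isPath p0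
  set p := p0.bypass with hpdef
  clear_value p
  cases p with
  | nil => exact hne rfl
  | @cons t z t0 hadj2 q =>
    have hzu : z = u := nbr_eq_of_leaf hG ht hadj2 hadj.symm
    have hzl : isLeafV z := by rw [hzu]; exact hu
    cases q with
    | nil =>
      obtain ⟨i, hi⟩ := hzl
      simp at hi
    | @cons z z2 t0 hadj3 q2 =>
      have hint : isInternalV z := by
        refine internal_of_two_nbrs hG (a := t) (b := z2) ?_ hadj2.symm hadj3
        intro he
        refine ((Walk.cons_isPath_iff _ _).mp hp).2 ?_
        rw [he, Walk.support_cons]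
        exact List.mem_cons_of_mem _ q2.start_mem_support
      exact (not_leafV_iff.mpr hint) hzl

lemma internal_has_internal_nbr (hn : 4 ≤ n) (hG : ubGraph n G) {x : V n}
    (hx : isInternalV x) : ∃ a, G.Adj x a ∧ isInternalV a := by
  by_contra h
  push_neg at h
  have hleaf : ∀ a, G.Adj x a → isLeafV a := fun a ha =>
    not_internalV_iff.mp (fun hi => (h a ha) hi)
  obtain ⟨j, rfl⟩ := hx
  have hj' : ∃ j' : Fin (n - 2), j' ≠ j := by
    by_cases h0 : j = ⟨0, by omega⟩
    · refine ⟨⟨1, by omega⟩, ?_⟩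
      rw [h0, Fin.ne_iff_vne]
      simp
    · exact ⟨⟨0, by omega⟩, fun he => h0 (he ▸ rfl)⟩
  obtain ⟨j', hj'ne⟩ := hj'
  obtain ⟨x', hx'ne, hx'int⟩ : ∃ x' : V n, x' ≠ Sum.inr j ∧ isInternalV x' :=
    ⟨Sum.inr j', by simpa using hj'ne, ⟨j', rfl⟩⟩
  obtain ⟨p0⟩ := hG.1.preconnected (Sum.inr j) x'
  have hp : p0.bypass.IsPath := Walk.bypass_isPath p0
  set p := p0.bypass with hpdef
  clear_value p
  cases p with
  | nil => exact hx'ne rfl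
  | @cons x z t0 hadj2 q =>
    have hz : isLeafV z := hleaf z hadj2
    cases q with
    | nil => exact (not_leafV_iff.mpr hx'int) hz
    | @cons z z2 t0 hadj3 q2 =>
      have hint : isInternalV z := by
        refine internal_of_two_nbrs hG (a := Sum.inr j) (b := z2) ?_ hadj2.symm hadj3
        intro he
        refine ((Walk.cons_isPath_iff _ _).mp hp).2 ?_
        rw [he, Walk.support_cons]
        exact List.mem_cons_of_mem _ q2.start_mem_support
      exact (not_leafV_iff.mpr hint) hz

/-- leaf neighbours of a vertex, as vertices -/
def LN (G : SimpleGraph (V n)) (x : V n) : Set (V n) := {a | G.Adj x a ∧ isLeafV a}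

/-- internal neighbours of a vertex -/
def IN (G : SimpleGraph (V n)) (x : V n) : Set (V n) := {a | G.Adj x a ∧ isInternalV a}

lemma LN_IN_split (x : V n) :
    (LN G x).ncard + (IN G x).ncard = (G.neighborSet x).ncard := by
  rw [← Set.ncard_union_eq ?_ (Set.toFinite _) (Set.toFinite _)]
  · congr 1
    ext a
    simp only [LN, IN, Set.mem_union, Set.mem_setOf_eq, mem_neighborSet]
    constructor
    · rintro (⟨h, -⟩ | ⟨h, -⟩) <;> exact h
    · intro h
      by_cases hl : isLeafV a
      · exact Or.inl ⟨h, hl⟩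
      · exact Or.inr ⟨h, not_leafV_iff.mp hl⟩
  · rw [Set.disjoint_left]
    rintro a ⟨-, hl⟩ ⟨-, hi⟩
    exact (not_leafV_iff.mpr hi) hl

lemma leafNeighborCount_eq (x : V n) : leafNeighborCount G x = (LN G x).ncard := by
  rw [leafNeighborCount]
  have : LN G x = Sum.inl '' {i : Fin n | G.Adj (Sum.inl i) x} := by
    ext a
    simp only [LN, Set.mem_setOf_eq, Set.mem_image]
    constructor
    · rintro ⟨hadj, i, rfl⟩
      exact ⟨i, hadj.symm, rfl⟩
    · rintro ⟨i, hadj, rfl⟩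
      exact ⟨hadj.symm, ⟨i, rfl⟩⟩
  rw [this, Set.ncard_image_of_injective _ Sum.inl_injective]

lemma IN_ncard (hn : 4 ≤ n) (hG : ubGraph n G) {x : V n} (hx : isInternalV x) :
    (IN G x).ncard = 3 - leafNeighborCount G x := by
  have := LN_IN_split (G := G) x
  rw [deg_int hG hx] at this
  rw [leafNeighborCount_eq]
  omega

lemma lnc_le_two (hn : 4 ≤ n) (hG : ubGraph n G) {x : V n} (hx : isInternalV x) :
    leafNeighborCount G x ≤ 2 := by
  obtain ⟨a, ha, hai⟩ := internal_has_internal_nbr hn hG hx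
  have h1 : LN G x ⊆ G.neighborSet x \ {a} := by
    rintro b ⟨hb, hbl⟩
    refine ⟨hb, ?_⟩
    rintro rfl
    exact (not_leafV_iff.mpr hai) hbl
  have ha' : a ∈ G.neighborSet x := ha
  have h2 : (G.neighborSet x \ {a}).ncard = 2 := by
    rw [Set.ncard_diff_singleton_of_mem ha', deg_int hG hx]
  rw [leafNeighborCount_eq]
  calc (LN G x).ncard ≤ _ := Set.ncard_le_ncard h1 (Set.toFinite _)
    _ = 2 := h2

/-- the unique neighbour of a leaf -/
def nbrV (hG : ubGraph n G) (i : Fin n) : V n :=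
  (Set.ncard_eq_one.mp (hG.2.2.1 i)).choose

lemma nbrV_spec (hG : ubGraph n G) (i : Fin n) :
    G.neighborSet (Sum.inl i) = {nbrV hG i} :=
  (Set.ncard_eq_one.mp (hG.2.2.1 i)).choose_spec

lemma nbrV_adj (hG : ubGraph n G) (i : Fin n) : G.Adj (Sum.inl i) (nbrV hG i) := by
  have h := nbrV_spec hG i
  have : nbrV hG i ∈ G.neighborSet (Sum.inl i) := by rw [h]; rfl
  exact this

lemma nbrV_eq (hG : ubGraph n G) {i : Fin n} {a : V n} (h : G.Adj (Sum.inl i) a) :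
    a = nbrV hG i := by
  have hm : a ∈ G.neighborSet (Sum.inl i) := h
  rw [nbrV_spec hG i] at hm
  exact hm

lemma edge_count (hn : 4 ≤ n) (hG : ubGraph n G) : G.edgeSet.ncard = 2 * n - 3 := by
  classical
  haveI : DecidableRel G.Adj := fun a b => Classical.dec _
  have htree : G.IsTree := ⟨hG.1, hG.2.1⟩
  have h := htree.card_edgeFinset
  rw [Fintype.card_sum, Fintype.card_fin, Fintype.card_fin] at h
  rw [Set.ncard_eq_toFinset_card' G.edgeSet]
  rw [SimpleGraph.edgeFinset] at h
  omega

lemma leaf_edges_card (hn : 4 ≤ n) (hG : ubGraph n G) :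
    {e ∈ G.edgeSet | ∃ z ∈ e, isLeafV z}.ncard = n := by
  have himg : {e ∈ G.edgeSet | ∃ z ∈ e, isLeafV z} =
      (fun i : Fin n => s(Sum.inl i, nbrV hG i)) '' Set.univ := by
    ext e
    simp only [Set.mem_setOf_eq, Set.mem_image, Set.mem_univ, true_and]
    constructor
    · rintro ⟨hee, z, hz, i, rfl⟩
      induction e with
      | _ a b =>
        rw [mem_edgeSet] at hee
        rcases Sym2.mem_iff.mp hz with rfl | rfl
        · exact ⟨i, by rw [← nbrV_eq hG hee]⟩
        · exact ⟨i, by rw [← nbrV_eq hG hee.symm, Sym2.eq_swap]⟩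
    · rintro ⟨i, rfl⟩
      exact ⟨(nbrV_adj hG i : G.Adj _ _), Sum.inl i, by simp, i, rfl⟩
  have hinj : Set.InjOn (fun i : Fin n => s(Sum.inl i, nbrV hG i)) Set.univ := by
    rintro i - i' - heq
    simp only at heq
    rcases Sym2.eq_iff.mp heq with ⟨h1, -⟩ | ⟨h1, -⟩
    · exact Sum.inl_injective h1
    · exfalso
      obtain ⟨j, hj⟩ := leaf_adj_internal hn hG ⟨i', rfl⟩ (nbrV_adj hG i')
      rw [hj] at h1
      exact absurd h1 (by simp)
  rw [himg, Set.ncard_image_of_injOn hinj, Set.ncard_univ, Nat.card_eq_fintype_card,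
    Fintype.card_fin]

lemma internal_edges_card (hn : 4 ≤ n) (hG : ubGraph n G) :
    {e ∈ G.edgeSet | ∀ z ∈ e, isInternalV z}.ncard = n - 3 := by
  have hsplit : G.edgeSet = {e ∈ G.edgeSet | ∃ z ∈ e, isLeafV z} ∪
      {e ∈ G.edgeSet | ∀ z ∈ e, isInternalV z} := by
    ext e
    simp only [Set.mem_union, Set.mem_setOf_eq]
    constructor
    · intro he
      by_cases h : ∃ z ∈ e, isLeafV z
      · exact Or.inl ⟨he, h⟩
      · push_neg at h
        exact Or.inr ⟨he, fun z hz => not_leafV_iff.mp (h z hz)⟩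
    · rintro (⟨he, -⟩ | ⟨he, -⟩) <;> exact he
  have hdisj : Disjoint {e ∈ G.edgeSet | ∃ z ∈ e, isLeafV z}
      {e ∈ G.edgeSet | ∀ z ∈ e, isInternalV z} := by
    rw [Set.disjoint_left]
    rintro e ⟨-, z, hz, hzl⟩ ⟨-, hint⟩
    exact (not_leafV_iff.mpr (hint z hz)) hzl
  have := edge_count hn hG
  rw [hsplit, Set.ncard_union_eq hdisj (Set.toFinite _) (Set.toFinite _),
    leaf_edges_card hn hG] at this
  omega

lemma ES1_eq (hn : 4 ≤ n) (hG : ubGraph n G) :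
    (ES G 1 fun u v => isInternalV u ∧ isInternalV v) =
      (fun e => ({e} : Set (Sym2 (V n)))) '' {e ∈ G.edgeSet | ∀ z ∈ e, isInternalV z} := by
  ext E
  simp only [ES, Set.mem_setOf_eq, Set.mem_image]
  constructor
  · rintro ⟨u, v, w, hw, hl, ⟨hu, hv⟩, rfl⟩
    cases w with
    | nil => simp at hl
    | @cons u b v h q =>
      cases q with
      | nil =>
        refine ⟨s(u, v), ⟨h, ?_⟩, ?_⟩
        · intro z hz
          rcases Sym2.mem_iff.mp hz with rfl | rfl
          exacts [hu, hv]
        · ext f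
          simp [ew]
      | cons h2 q2 => simp [Walk.length_cons] at hl
  · rintro ⟨e, ⟨hee, hint⟩, rfl⟩
    induction e with
    | _ a b =>
      rw [mem_edgeSet] at hee
      refine ⟨a, b, Walk.cons hee Walk.nil, single_edge_isPath hee, rfl,
        ⟨hint a (Sym2.mem_mk_left a b), hint b (Sym2.mem_mk_right a b)⟩, ?_⟩
      ext f
      simp [ew]

lemma p1_count (hn : 4 ≤ n) (hG : ubGraph n G) :
    (ES G 1 fun u v => isInternalV u ∧ isInternalV v).ncard = n - 3 := by
  rw [ES1_eq hn hG,
    Set.ncard_image_of_injOn (fun a _ b _ h => Set.singleton_eq_singleton_iff.mp h),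
    internal_edges_card hn hG]

lemma pathCount_ES (G : SimpleGraph (V n)) (k : ℕ) :
    pathCount G k = (ES G k fun _ _ => True).ncard := by
  apply congrArg Set.ncard
  ext E
  simp only [pathCount, ES, ew, Set.mem_setOf_eq, true_and]

lemma llPC_ES (G : SimpleGraph (V n)) (k : ℕ) :
    leafLeafPathCount G k = (ES G k fun u v => isLeafV u ∧ isLeafV v).ncard := by
  apply congrArg Set.ncard
  ext E
  simp only [leafLeafPathCount, ES, ew, Set.mem_setOf_eq]
  try tauto

lemma olPC_ES (G : SimpleGraph (V n)) (k : ℕ) :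
    oneLeafPathCount G k =
      (ES G k fun u v => (isLeafV u ∧ ¬isLeafV v) ∨ (¬isLeafV u ∧ isLeafV v)).ncard := by
  apply congrArg Set.ncard
  ext E
  simp only [oneLeafPathCount, ES, ew, Set.mem_setOf_eq]
  try tauto

lemma iPC_ES (hG : ubGraph n G) (k : ℕ) :
    internalPathCount G k =
      (ES G k fun u v => isInternalV u ∧ isInternalV v).ncard := by
  apply congrArg Set.ncard
  ext E
  simp only [internalPathCount, ES, ew, Set.mem_setOf_eq]
  constructor
  · rintro ⟨u, v, w, hw, hl, hint, rfl⟩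
    exact ⟨u, v, w, hw, hl,
      ⟨hint _ w.start_mem_support, hint _ w.end_mem_support⟩, rfl⟩
  · rintro ⟨u, v, w, hw, hl, ⟨hu, hv⟩, rfl⟩
    refine ⟨u, v, w, hw, hl, ?_, rfl⟩
    intro z hz
    by_cases hzu : z = u
    · exact hzu ▸ hu
    by_cases hzv : z = v
    · exact hzv ▸ hv
    exact interior_internal hG w hw z hz hzu hzv

open scoped Classical in
/-- midpoint of a length-2 path edge set -/
noncomputable def midOf (hn : 4 ≤ n) (E : Set (Sym2 (V n))) : V n :=
  if h : ∃ z : V n, cnt E z = 2 then h.choose else Sum.inl ⟨0, by omega⟩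

lemma len2_decomp {u v : V n} (w : G.Walk u v) (hl : w.length = 2) :
    ∃ (m : V n) (h1 : G.Adj u m) (h2 : G.Adj m v),
      w = Walk.cons h1 (Walk.cons h2 Walk.nil) := by
  cases w with
  | nil => simp at hl
  | @cons u m v h q =>
    cases q with
    | nil => simp at hl
    | @cons m z v h2 q2 =>
      cases q2 with
      | nil => exact ⟨m, h, h2, rfl⟩
      | cons h3 q3 => simp [Walk.length_cons] at hl

lemma len2_isPath {u v m : V n} (h1 : G.Adj u m) (h2 : G.Adj m v) (huv : u ≠ v) :
    (Walk.cons h1 (Walk.cons h2 Walk.nil) : G.Walk u v).IsPath := by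
  rw [Walk.isPath_def]
  simp [huv, h1.ne, h2.ne]

lemma midOf_path (hn : 4 ≤ n) {u v m : V n} (h1 : G.Adj u m) (h2 : G.Adj m v)
    (huv : u ≠ v) :
    midOf hn (ew (Walk.cons h1 (Walk.cons h2 Walk.nil) : G.Walk u v)) = m := by
  have hw := len2_isPath h1 h2 huv
  have hmum : m ≠ u := h1.ne'
  have hmv : m ≠ v := h2.ne
  have hc : ∀ z : V n, cnt (ew (Walk.cons h1 (Walk.cons h2 Walk.nil) : G.Walk u v)) z = 2
      ↔ z = m := by
    intro z
    rw [cnt_path _ hw huv z]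
    by_cases hz : z = u ∨ z = v
    · rcases hz with rfl | rfl <;> simp [huv, hmum.symm, hmv.symm]
    · push_neg at hz
      simp only [hz.1, hz.2, or_self, if_false]
      by_cases hzm : z = m
      · subst hzm
        simp [Walk.support_cons]
      · have : z ∉ (Walk.cons h1 (Walk.cons h2 Walk.nil) : G.Walk u v).support := by
          simp [Walk.support_cons, hz.1, hz.2, hzm]
        simp [this, hzm, hz.1, hz.2]
  rw [midOf]
  split_ifs with h
  · exact (hc _).mp h.choose_spec
  · exact absurd ⟨m, (hc m).mpr rfl⟩ h

lemma fiber2_eq (hn : 4 ≤ n) (hG : ubGraph n G) {x : V n} (hx : isInternalV x) :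
    {E ∈ ES G 2 fun u v => isInternalV u ∧ isInternalV v | midOf hn E = x} =
      (fun t : Finset (V n) => (fun a => s(a, x)) '' (t : Set (V n))) ''
        ↑((Set.toFinite (IN G x)).toFinset.powersetCard 2) := by
  classical
  ext E
  simp only [Set.mem_setOf_eq, Set.mem_image, Finset.mem_coe, Finset.mem_powersetCard]
  constructor
  · rintro ⟨⟨u, v, w, hw, hl, ⟨hu, hv⟩, rfl⟩, hmid⟩
    obtain ⟨m, h1, h2, rfl⟩ := len2_decomp w hl
    have huv : u ≠ v := path_ne hw (by rw [hl]; omega)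
    have hmx : m = x := by rw [← midOf_path hn h1 h2 huv]; exact hmid
    subst hmx
    refine ⟨{u, v}, ⟨?_, Finset.card_pair huv⟩, ?_⟩
    · intro a ha
      rw [Set.Finite.mem_toFinset]
      rcases Finset.mem_insert.mp ha with rfl | ha
      · exact ⟨h1.symm, hu⟩
      · rw [Finset.mem_singleton] at ha
        subst ha
        exact ⟨h2, hv⟩
    · ext f
      simp only [Set.mem_image, Finset.coe_insert, Finset.coe_singleton,
        Set.mem_insert_iff, Set.mem_singleton_iff, ew, Set.mem_setOf_eq,
        Walk.edges_cons, Walk.edges_nil, List.mem_cons, List.not_mem_nil, or_false]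
      constructor
      · rintro ⟨a, ha, rfl⟩
        rcases ha with rfl | rfl
        · exact Or.inl rfl
        · exact Or.inr Sym2.eq_swap
      · intro hf
        rcases hf with rfl | rfl
        · exact ⟨u, Or.inl rfl, rfl⟩
        · exact ⟨v, Or.inr rfl, Sym2.eq_swap⟩
  · rintro ⟨t, ⟨hsub, hcard⟩, rfl⟩
    obtain ⟨a, b, hab, rfl⟩ := Finset.card_eq_two.mp hcard
    have hain : a ∈ IN G x := by
      rw [← Set.Finite.mem_toFinset (Set.toFinite _)]
      exact hsub (Finset.mem_insert_self a {b})
    have hbin : b ∈ IN G x := by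
      rw [← Set.Finite.mem_toFinset (Set.toFinite _)]
      exact hsub (Finset.mem_insert_of_mem (Finset.mem_singleton_self b))
    obtain ⟨hxa, hai⟩ := hain
    obtain ⟨hxb, hbi⟩ := hbin
    have hw := len2_isPath hxa.symm hxb hab
    have hewq : ew (Walk.cons hxa.symm (Walk.cons hxb Walk.nil) : G.Walk a b) =
        (fun c => s(c, x)) '' (({a, b} : Finset (V n)) : Set (V n)) := by
      ext f
      simp only [Set.mem_image, Finset.coe_insert, Finset.coe_singleton,
        Set.mem_insert_iff, Set.mem_singleton_iff, ew, Set.mem_setOf_eq,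
        Walk.edges_cons, Walk.edges_nil, List.mem_cons, List.not_mem_nil, or_false]
      constructor
      · intro hf
        rcases hf with rfl | rfl
        · exact ⟨a, Or.inl rfl, rfl⟩
        · exact ⟨b, Or.inr rfl, Sym2.eq_swap⟩
      · rintro ⟨c, hc, rfl⟩
        rcases hc with rfl | rfl
        · exact Or.inl rfl
        · exact Or.inr Sym2.eq_swap
    constructor
    · exact ⟨a, b, _, hw, rfl, ⟨hai, hbi⟩, hewq.symm⟩
    · rw [← hewq]
      exact midOf_path hn hxa.symm hxb hab

lemma fiber2_card (hn : 4 ≤ n) (hG : ubGraph n G) {x : V n} (hx : isInternalV x) :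
    {E ∈ ES G 2 fun u v => isInternalV u ∧ isInternalV v | midOf hn E = x}.ncard =
      (3 - leafNeighborCount G x).choose 2 := by
  classical
  rw [fiber2_eq hn hG hx]
  have hinj : Set.InjOn (fun t : Finset (V n) => (fun a => s(a, x)) '' (t : Set (V n)))
      ↑((Set.toFinite (IN G x)).toFinset.powersetCard 2) := by
    intro t ht t' ht' heq
    simp only [Finset.mem_coe, Finset.mem_powersetCard] at ht ht'
    have hmem : ∀ (s s' : Finset (V n)), s ⊆ (Set.toFinite (IN G x)).toFinset →
        (fun a => s(a, x)) '' (s : Set (V n)) = (fun a => s(a, x)) '' (s' : Set (V n)) →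
        s ⊆ s' := by
      intro s s' hs hss c hc
      have : s(c, x) ∈ (fun a => s(a, x)) '' (s' : Set (V n)) := by
        rw [← hss]
        exact ⟨c, hc, rfl⟩
      obtain ⟨c', hc', hcc⟩ := this
      rcases Sym2.eq_iff.mp hcc with ⟨h1, -⟩ | ⟨h1, h2⟩
      · exact Finset.mem_coe.mp (h1 ▸ hc')
      · exact Finset.mem_coe.mp ((h1.trans h2) ▸ hc')
    exact Finset.Subset.antisymm (hmem t t' ht.1 heq) (hmem t' t ht'.1 heq.symm)
  rw [Set.ncard_image_of_injOn hinj, Set.ncard_coe_finset,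
    Finset.card_powersetCard]
  congr 1
  rw [← IN_ncard hn hG hx, ← Set.ncard_coe_finset, Set.Finite.coe_toFinset]

lemma p2_sum (hn : 4 ≤ n) (hG : ubGraph n G) :
    (ES G 2 fun u v => isInternalV u ∧ isInternalV v).ncard =
      ∑ j : Fin (n - 2), (3 - leafNeighborCount G (Sum.inr j)).choose 2 := by
  classical
  have hAfin : (ES G 2 fun u v => isInternalV u ∧ isInternalV v).Finite := Set.toFinite _
  have hmap : ∀ E ∈ hAfin.toFinset, midOf hn E ∈
      (Finset.univ : Finset (Fin (n - 2))).image (Sum.inr : Fin (n - 2) → V n) := by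
    intro E hE
    rw [Set.Finite.mem_toFinset] at hE
    obtain ⟨u, v, w, hw, hl, ⟨hu, hv⟩, rfl⟩ := hE
    obtain ⟨m, h1, h2, rfl⟩ := len2_decomp w hl
    have huv : u ≠ v := path_ne hw (by rw [hl]; omega)
    rw [midOf_path hn h1 h2 huv]
    have hmint : isInternalV m :=
      interior_internal hG _ hw m (by simp [Walk.support_cons]) h1.ne' h2.ne
    obtain ⟨j, rfl⟩ := hmint
    simp
  have hcard := Finset.card_eq_sum_card_fiberwise hmap
  rw [Finset.sum_image (by intro a _ b _ h; exact Sum.inr_injective h)] at hcard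
  have h1 : (ES G 2 fun u v => isInternalV u ∧ isInternalV v).ncard =
      hAfin.toFinset.card := by
    rw [← Set.ncard_coe_finset, Set.Finite.coe_toFinset]
  rw [h1, hcard]
  refine Finset.sum_congr rfl fun j _ => ?_
  rw [← fiber2_card hn hG ⟨j, rfl⟩]
  rw [← Set.ncard_coe_finset]
  congr 1
  rw [Finset.coe_filter]
  ext E
  simp only [Set.mem_setOf_eq, Set.Finite.mem_toFinset]

lemma sum_lnc (hn : 4 ≤ n) (hG : ubGraph n G) :
    ∑ j : Fin (n - 2), leafNeighborCount G (Sum.inr j) = n := by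
  classical
  have hint : ∀ i : Fin n, isInternalV (nbrV hG i) :=
    fun i => leaf_adj_internal hn hG ⟨i, rfl⟩ (nbrV_adj hG i)
  set f : Fin n → Fin (n - 2) := fun i => (hint i).choose with hf
  have hfspec : ∀ i, nbrV hG i = Sum.inr (f i) := fun i => (hint i).choose_spec
  have hmap : ∀ i ∈ (Finset.univ : Finset (Fin n)), f i ∈
      (Finset.univ : Finset (Fin (n - 2))) := fun i _ => Finset.mem_univ _
  have hcard := Finset.card_eq_sum_card_fiberwise hmap
  rw [Finset.card_univ, Fintype.card_fin] at hcard
  have hsum : ∀ j : Fin (n - 2), (Finset.univ.filter fun i => f i = j).card =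
      leafNeighborCount G (Sum.inr j) := by
    intro j
    rw [leafNeighborCount, ← Set.ncard_coe_finset]
    congr 1
    ext i
    simp only [Finset.coe_filter, Finset.mem_univ, true_and, Set.mem_setOf_eq]
    constructor
    · rintro rfl
      have := nbrV_adj hG i
      rwa [hfspec i] at this
    · intro hadj
      have h1 := nbrV_eq hG hadj
      rw [hfspec i] at h1
      exact (Sum.inr_injective h1).symm
  rw [show (∑ j : Fin (n - 2), leafNeighborCount G (Sum.inr j)) =
    ∑ j : Fin (n - 2), (Finset.univ.filter fun i => f i = j).card from
      Finset.sum_congr rfl fun j _ => (hsum j).symm, ← hcard]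

open scoped Classical in
noncomputable def cher (hn : 4 ≤ n) (G : SimpleGraph (V n)) (j : Fin (n - 2)) :
    Sym2 (Fin n) :=
  if hj : ∃ p : Fin n × Fin n, p.1 ≠ p.2 ∧
      {i : Fin n | G.Adj (Sum.inl i) (Sum.inr j)} = {p.1, p.2}
  then s(hj.choose.1, hj.choose.2) else s(⟨0, by omega⟩, ⟨0, by omega⟩)

lemma cher_spec (hn : 4 ≤ n) {G : SimpleGraph (V n)} {j : Fin (n - 2)}
    (h2 : leafNeighborCount G (Sum.inr j) = 2) :
    ∃ a b : Fin n, a ≠ b ∧ cher hn G j = s(a, b) ∧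
      {i : Fin n | G.Adj (Sum.inl i) (Sum.inr j)} = {a, b} := by
  rw [leafNeighborCount] at h2
  obtain ⟨x, y, hxy, hset⟩ := Set.ncard_eq_two.mp h2
  have hj : ∃ p : Fin n × Fin n, p.1 ≠ p.2 ∧
      {i : Fin n | G.Adj (Sum.inl i) (Sum.inr j)} = {p.1, p.2} := ⟨(x, y), hxy, hset⟩
  refine ⟨hj.choose.1, hj.choose.2, hj.choose_spec.1, ?_, hj.choose_spec.2⟩
  rw [cher, dif_pos hj]

lemma cherry_card (hn : 4 ≤ n) (hG : ubGraph n G) :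
    cherryCount G = ((Finset.univ : Finset (Fin (n - 2))).filter
      (fun j => leafNeighborCount G (Sum.inr j) = 2)).card := by
  classical
  set T : Set (Fin (n - 2)) := {j | leafNeighborCount G (Sum.inr j) = 2} with hT
  have himg : cherrySet G = cher hn G '' T := by
    ext c
    constructor
    · rintro ⟨i, i', v, hne, rfl, hadj1, hadj2⟩
      have hv1 : v = nbrV hG i := nbrV_eq hG hadj1
      obtain ⟨j, hj⟩ := leaf_adj_internal hn hG ⟨i, rfl⟩ hadj1
      subst hj
      have hTj : j ∈ T := by
        rw [hT, Set.mem_setOf_eq, leafNeighborCount]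
        have hub := lnc_le_two hn hG (⟨j, rfl⟩ : isInternalV (Sum.inr j : V n))
        rw [leafNeighborCount] at hub
        have hlb : ({i, i'} : Set (Fin n)).ncard ≤
            {i'' : Fin n | G.Adj (Sum.inl i'') (Sum.inr j)}.ncard := by
          apply Set.ncard_le_ncard _ (Set.toFinite _)
          rintro z (rfl | rfl)
          · exact hadj1
          · exact hadj2
        rw [Set.ncard_pair hne] at hlb
        omega
      obtain ⟨a, b, hab, hcher, hset⟩ := cher_spec hn (hTj : _)
      refine ⟨j, hTj, ?_⟩
      rw [hcher]
      have hi : i ∈ ({a, b} : Set (Fin n)) := hset ▸ hadj1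
      have hi' : i' ∈ ({a, b} : Set (Fin n)) := hset ▸ hadj2
      rcases hi with rfl | hi <;> rcases hi' with rfl | hi'
      · exact absurd rfl hne
      · rw [Set.mem_singleton_iff] at hi'; subst hi'; rfl
      · rw [Set.mem_singleton_iff] at hi; subst hi; exact Sym2.eq_swap.symm
      · rw [Set.mem_singleton_iff] at hi hi'; subst hi; subst hi'
        exact absurd rfl hne
    · rintro ⟨j, hTj, rfl⟩
      obtain ⟨a, b, hab, hcher, hset⟩ := cher_spec hn (hTj : _)
      have ha : G.Adj (Sum.inl a) (Sum.inr j) := by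
        have : a ∈ ({a, b} : Set (Fin n)) := by simp
        rw [← hset] at this
        exact this
      have hb : G.Adj (Sum.inl b) (Sum.inr j) := by
        have : b ∈ ({a, b} : Set (Fin n)) := by simp
        rw [← hset] at this
        exact this
      exact ⟨a, b, Sum.inr j, hab, hcher, ha, hb⟩
  have hinj : Set.InjOn (cher hn G) T := by
    intro j hj j' hj' heq
    obtain ⟨a, b, hab, hcher, hset⟩ := cher_spec hn (hj : _)
    obtain ⟨a', b', hab', hcher', hset'⟩ := cher_spec hn (hj' : _)
    have ha : G.Adj (Sum.inl a) (Sum.inr j) := by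
      have : a ∈ ({a, b} : Set (Fin n)) := by simp
      rw [← hset] at this
      exact this
    have ha' : G.Adj (Sum.inl a) (Sum.inr j') := by
      have hm : a ∈ ({a', b'} : Set (Fin n)) := by
        rw [← hset']
        have : s(a, b) = s(a', b') := by rw [← hcher, ← hcher', heq]
        rcases Sym2.eq_iff.mp this with ⟨h1, -⟩ | ⟨h1, -⟩
        · rw [hset', h1]; simp
        · rw [hset', h1]; simp
      rw [← hset'] at hm
      exact hm
    have h1 := nbrV_eq hG ha
    have h2 := nbrV_eq hG ha'
    exact Sum.inr_injective (h1.trans h2.symm)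
  rw [cherryCount, himg, Set.ncard_image_of_injOn hinj, ← Set.ncard_coe_finset]
  congr 1
  ext j
  simp [hT]

lemma choose_identity {l : ℕ} (hl : l ≤ 2) :
    (3 - l).choose 2 + 2 * l = 3 + (if l = 2 then 1 else 0) := by
  interval_cases l <;> simp [Nat.choose]

lemma p2_count (hn : 4 ≤ n) (hG : ubGraph n G) :
    (ES G 2 fun u v => isInternalV u ∧ isInternalV v).ncard =
      n + cherryCount G - 6 := by
  classical
  have h1 := p2_sum hn hG
  have h2 := sum_lnc hn hG
  have h3 := cherry_card hn hG
  have hpt : ∀ j : Fin (n - 2),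
      (3 - leafNeighborCount G (Sum.inr j)).choose 2 +
        2 * leafNeighborCount G (Sum.inr j) =
      3 + (if leafNeighborCount G (Sum.inr j) = 2 then 1 else 0) := fun j =>
    choose_identity (lnc_le_two hn hG ⟨j, rfl⟩)
  have key : (∑ j : Fin (n - 2), (3 - leafNeighborCount G (Sum.inr j)).choose 2) +
      2 * (∑ j : Fin (n - 2), leafNeighborCount G (Sum.inr j)) =
      3 * (n - 2) + cherryCount G := by
    rw [Finset.mul_sum, ← Finset.sum_add_distrib,
      Finset.sum_congr rfl fun j _ => hpt j, Finset.sum_add_distrib,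
      Finset.sum_const, Finset.card_univ, Fintype.card_fin, smul_eq_mul,
      ← Finset.card_filter, h3, Nat.mul_comm]
  rw [h2] at key
  rw [h1]
  omega

lemma p2_count' (hn : 4 ≤ n) (hG : ubGraph n G) :
    internalPathCount G 2 = n + cherryCount G - 6 := by
  rw [iPC_ES hG 2, p2_count hn hG]


end Phylo

/-- For `T ∈ UB(n)` with `n ≥ 4` leaves and `c` cherries: `p₁(T) = n − 3`,
`p₂(T) = n + c − 6`, and for every `k ≥ 3`,
`p_k(T) = 4·p_{k−2}(T) − h_k(T) − m_k(T)`. -/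
theorem internal_path_recursion (n : ℕ) (hn : 4 ≤ n) (G : SimpleGraph (Phylo.V n))
    (hG : Phylo.ubGraph n G) :
    Phylo.internalPathCount G 1 = n - 3 ∧
    Phylo.internalPathCount G 2 = n + Phylo.cherryCount G - 6 ∧
    ∀ k : ℕ, 3 ≤ k →
      (Phylo.internalPathCount G k : ℤ) =
        4 * (Phylo.internalPathCount G (k - 2) : ℤ) -
          (Phylo.oneLeafPathCount G k : ℤ) - (Phylo.leafLeafPathCount G k : ℤ) := by
  refine ⟨?_, ?_, ?_⟩
  · rw [Phylo.iPC_ES hG 1, Phylo.p1_count hn hG]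
  · exact Phylo.p2_count' hn hG
  · intro k hk
    have hpart := Phylo.ES_partition hG (k := k) (by omega)
    have htop := Phylo.card_ES_top hG (k := k) hk
    have h1 := Phylo.iPC_ES hG k
    have h2 := Phylo.olPC_ES G k
    have h3 := Phylo.llPC_ES G k
    have h4 := Phylo.iPC_ES hG (k - 2)
    rw [htop] at hpart
    rw [h1, h2, h3, h4]
    omega
end
end

section
/- For every fixed positive integer k there exists a constant M_k > 0 such that for all T ∈ UB(n) with n ≥ 4: (i) the number A_{T,k} of sets of k distinct, pairwise non-adjacent internal edges of T (for 1 ≤ k ≤ n−3) satisfies (1/k!)n^k − (k(5k+1)/(2·k!))n^{k−1} − M_k·n^{k−2} ≤ A_{T,k} ≤ (1/k!)n^k − (k(k+2)/k!)n^{k−1} + M_k·n^{k−2}; and (ii) the number B_{T,k} of sets of k distinct internal edges of T in which exactly two of the edges are adjacent (for 2 ≤ k ≤ n−3) satisfies (1/(2(k−2)!))n^{k−1} − M_k·n^{k−2} ≤ B_{T,k} ≤ (2/(k−2)!)n^{k−1} + M_k·n^{k−2}. -/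
open SimpleGraph

noncomputable section

open Finset

namespace EdgeAux

lemma sum_range_cast (c k : ℕ) :
    (∑ i ∈ Finset.range k, ((c : ℝ) + i)) = c * k + k * ((k : ℝ) - 1) / 2 := by
  induction k with
  | zero => simp
  | succ k ih => rw [Finset.sum_range_succ, ih]; push_cast; ring

lemma sum_range_nonneg (c k : ℕ) : 0 ≤ (∑ i ∈ Finset.range k, ((c : ℝ) + i)) :=
  Finset.sum_nonneg (fun i _ => by positivity)

lemma prod_lower (x : ℝ) (hx : 0 ≤ x) :
    ∀ (k : ℕ) (a : ℕ → ℝ), (∀ i, i < k → 0 ≤ a i ∧ a i ≤ x) →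
      x ^ k - (∑ i ∈ Finset.range k, a i) * x ^ (k - 1) ≤
        ∏ i ∈ Finset.range k, (x - a i) := by
  intro k
  induction k with
  | zero => intro a _; simp
  | succ m ih =>
    intro a ha
    have ham := ha m (Nat.lt_succ_self m)
    have IH := ih a (fun i hi => ha i (hi.trans (Nat.lt_succ_self m)))
    rw [Finset.prod_range_succ, Finset.sum_range_succ]
    have h1 : (x ^ m - (∑ i ∈ Finset.range m, a i) * x ^ (m - 1)) * (x - a m) ≤
        (∏ i ∈ Finset.range m, (x - a i)) * (x - a m) :=
      mul_le_mul_of_nonneg_right IH (by linarith [ham.2])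
    refine le_trans ?_ h1
    rcases Nat.eq_zero_or_pos m with hm | hm
    · subst hm; simp
    · obtain ⟨m', rfl⟩ : ∃ m', m = m' + 1 := ⟨m - 1, by omega⟩
      have hS := Finset.sum_nonneg (fun i (_ : i ∈ Finset.range (m' + 1)) =>
        (ha i (by simp at *; omega)).1)
      have hp : (0:ℝ) ≤ x ^ m' := pow_nonneg hx m'
      simp only [Nat.add_sub_cancel, pow_succ]
      nlinarith [mul_nonneg (mul_nonneg hS ham.1) hp]

lemma Qsum_nonneg (k : ℕ) (a : ℕ → ℝ) (h : ∀ i, i < k → 0 ≤ a i) :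
    0 ≤ ∑ i ∈ Finset.range k, a i * (∑ j ∈ Finset.range i, a j) := by
  refine Finset.sum_nonneg (fun i hi => ?_)
  rw [Finset.mem_range] at hi
  exact mul_nonneg (h i hi) (Finset.sum_nonneg (fun j hj => h j (by
    rw [Finset.mem_range] at hj; omega)))

lemma Qsum_le_sq (k : ℕ) (a : ℕ → ℝ) (h : ∀ i, i < k → 0 ≤ a i) :
    (∑ i ∈ Finset.range k, a i * (∑ j ∈ Finset.range i, a j)) ≤
      (∑ i ∈ Finset.range k, a i) ^ 2 := by
  induction k with
  | zero => simp
  | succ m ih =>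
    have ham : 0 ≤ a m := h m (Nat.lt_succ_self m)
    have hS : 0 ≤ ∑ i ∈ Finset.range m, a i :=
      Finset.sum_nonneg (fun i hi => h i (by rw [Finset.mem_range] at hi; omega))
    have IH := ih (fun i hi => h i (hi.trans (Nat.lt_succ_self m)))
    rw [Finset.sum_range_succ, Finset.sum_range_succ (f := a)]
    nlinarith

lemma prod_upper (x : ℝ) (hx : 0 ≤ x) :
    ∀ (k : ℕ) (a : ℕ → ℝ), (∀ i, i < k → 0 ≤ a i ∧ a i ≤ x) →
      (∏ i ∈ Finset.range k, (x - a i)) ≤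
        x ^ k - (∑ i ∈ Finset.range k, a i) * x ^ (k - 1) +
          (∑ i ∈ Finset.range k, a i * (∑ j ∈ Finset.range i, a j)) * x ^ (k - 2) := by
  intro k
  induction k with
  | zero => intro a _; simp
  | succ m ih =>
    intro a ha
    have ham := ha m (Nat.lt_succ_self m)
    rcases Nat.lt_or_ge m 2 with hm | hm
    · interval_cases m
      · simp
      · rw [show (1:ℕ) + 1 = 2 from rfl]
        have h0 := ha 0 (by omega)
        simp [Finset.prod_range_succ, Finset.sum_range_succ]
        ring_nf
        nlinarith [h0.1, ham.1]
    · have IH := ih a (fun i hi => ha i (hi.trans (Nat.lt_succ_self m)))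
      have hQ := Qsum_nonneg m a (fun i hi => (ha i (hi.trans (Nat.lt_succ_self m))).1)
      rw [Finset.prod_range_succ, Finset.sum_range_succ,
        Finset.sum_range_succ (f := fun i => a i * (∑ j ∈ Finset.range i, a j))]
      have h1 : (∏ i ∈ Finset.range m, (x - a i)) * (x - a m) ≤
          (x ^ m - (∑ i ∈ Finset.range m, a i) * x ^ (m - 1) +
            (∑ i ∈ Finset.range m, a i * (∑ j ∈ Finset.range i, a j)) * x ^ (m - 2)) *
            (x - a m) :=
        mul_le_mul_of_nonneg_right IH (by linarith [ham.2])
      refine h1.trans ?_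
      obtain ⟨m', rfl⟩ : ∃ m', m = m' + 2 := ⟨m - 2, by omega⟩
      have hp : (0:ℝ) ≤ x ^ m' := pow_nonneg hx m'
      simp only [show m' + 2 + 1 - 2 = m' + 1 from rfl, show m' + 2 + 1 - 1 = m' + 2 from rfl,
        show m' + 2 - 1 = m' + 1 from rfl, show m' + 2 - 2 = m' from rfl, pow_succ]
      nlinarith [mul_nonneg (mul_nonneg hQ ham.1) hp]


lemma descF_cast (n c j : ℕ) (h : c + j ≤ n) :
    (((n - c).descFactorial j : ℕ) : ℝ) = ∏ i ∈ Finset.range j, ((n : ℝ) - (c + i)) := by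
  rw [Nat.descFactorial_eq_prod_range, Nat.cast_prod]
  refine Finset.prod_congr rfl (fun i hi => ?_)
  rw [Finset.mem_range] at hi
  have h1 : c + i ≤ n := by omega
  rw [Nat.sub_sub, Nat.cast_sub h1]
  push_cast
  ring

lemma descF_choose (m j : ℕ) :
    ((m.descFactorial j : ℕ) : ℝ) = (j.factorial : ℝ) * (m.choose j : ℝ) := by
  rw [Nat.descFactorial_eq_factorial_mul_choose]; push_cast; ring

/-- Lower bound for binomial coefficients. -/
lemma choose_lb (n c j : ℕ) (h : c + j ≤ n) :
    (n : ℝ) ^ j - ((c : ℝ) * j + j * ((j:ℝ) - 1) / 2) * (n : ℝ) ^ (j - 1) ≤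
      (j.factorial : ℝ) * ((n - c).choose j : ℝ) := by
  rw [← descF_choose, descF_cast n c j h, ← sum_range_cast]
  exact prod_lower (n : ℝ) (by positivity) j (fun i => (c : ℝ) + i)
    (fun i hi => ⟨by positivity, by
      have : (c : ℝ) + i ≤ c + j := by
        have : (i : ℝ) ≤ j := by exact_mod_cast le_of_lt hi
        linarith
      have hn : ((c + j : ℕ) : ℝ) ≤ n := by exact_mod_cast h
      push_cast at hn ⊢; linarith⟩)

/-- Upper bound with second-order term. -/
lemma choose_ub2 (n c j : ℕ) (h : c + j ≤ n) :
    (j.factorial : ℝ) * ((n - c).choose j : ℝ) ≤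
      (n : ℝ) ^ j - ((c : ℝ) * j + j * ((j:ℝ) - 1) / 2) * (n : ℝ) ^ (j - 1) +
        ((c : ℝ) * j + j * ((j:ℝ) - 1) / 2) ^ 2 * (n : ℝ) ^ (j - 2) := by
  rw [← descF_choose, descF_cast n c j h, ← sum_range_cast]
  have hb : ∀ i, i < j → 0 ≤ (c : ℝ) + i ∧ (c : ℝ) + i ≤ n := fun i hi => ⟨by positivity, by
    have : (i : ℝ) < j := by exact_mod_cast hi
    have hn : ((c + j : ℕ) : ℝ) ≤ n := by exact_mod_cast h
    push_cast at hn ⊢; linarith⟩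
  refine (prod_upper (n : ℝ) (by positivity) j (fun i => (c : ℝ) + i) hb).trans ?_
  have hQ := Qsum_le_sq j (fun i => (c : ℝ) + i) (fun i hi => (hb i hi).1)
  have hp : (0:ℝ) ≤ (n:ℝ) ^ (j - 2) := by positivity
  nlinarith [mul_le_mul_of_nonneg_right hQ hp]

/-- Crude upper bound. -/
lemma choose_ub_pow (m j n : ℕ) (h : m ≤ n) :
    (j.factorial : ℝ) * (m.choose j : ℝ) ≤ (n : ℝ) ^ j := by
  rw [← descF_choose]
  calc ((m.descFactorial j : ℕ) : ℝ) ≤ ((m ^ j : ℕ) : ℝ) := by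
        exact_mod_cast m.descFactorial_le_pow j
    _ ≤ (n : ℝ) ^ j := by
        push_cast
        exact pow_le_pow_left₀ (by positivity) (by exact_mod_cast h) j

section counting
variable {α : Type*} [DecidableEq α]

lemma filter_superset_card_le (J : Finset α) (j : ℕ) (u : Finset α)
    [DecidablePred (fun s : Finset α => u ⊆ s)] :
    ((J.powersetCard j).filter (fun s => u ⊆ s)).card ≤ J.card.choose (j - u.card) := by
  rw [← Finset.card_powersetCard (j - u.card) J]
  refine Finset.card_le_card_of_injOn (fun s => s \ u) ?_ ?_
  · intro s hs
    rw [Finset.mem_coe, Finset.mem_filter, Finset.mem_powersetCard] at hs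
    rw [Finset.mem_coe, Finset.mem_powersetCard]
    exact ⟨Finset.sdiff_subset.trans hs.1.1, by rw [Finset.card_sdiff_of_subset hs.2, hs.1.2]⟩
  · intro s hs t ht hst
    rw [Finset.mem_coe, Finset.mem_filter] at hs ht
    have hst' : s \ u = t \ u := hst
    rw [← Finset.sdiff_union_of_subset hs.2, ← Finset.sdiff_union_of_subset ht.2, hst']

lemma filter_superset_empty (J : Finset α) (j : ℕ) (u : Finset α)
    [DecidablePred (fun s : Finset α => u ⊆ s)] (h : j < u.card) :
    ((J.powersetCard j).filter (fun s => u ⊆ s)).card = 0 := by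
  rw [Finset.card_eq_zero]
  rw [Finset.filter_eq_empty_iff]
  intro s hs
  rw [Finset.mem_powersetCard] at hs
  intro hsub
  have := Finset.card_le_card hsub
  omega

end counting

end EdgeAux

namespace EdgeAux

open Phylo SimpleGraph Finset
open scoped Classical

variable {n : ℕ}

lemma internal_not_leaf {v : V n} (h : isInternalV v) : ¬ isLeafV v := by
  obtain ⟨j, rfl⟩ := h
  rintro ⟨i, hi⟩
  exact absurd hi (by simp)

lemma not_leaf_internal {v : V n} (h : ¬ isLeafV v) : isInternalV v := by
  cases v with
  | inl i => exact absurd ⟨i, rfl⟩ h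
  | inr j => exact ⟨j, rfl⟩

lemma walk_closed {α : Type} (G : SimpleGraph α) (S : Set α)
    (hS : ∀ u ∈ S, ∀ w, G.Adj u w → w ∈ S) :
    ∀ {a b : α}, (w : G.Walk a b) → a ∈ S → b ∈ S := by
  intro a b w
  induction w with
  | nil => exact id
  | cons h p ih => exact fun ha => ih (hS _ ha _ h)

lemma no_leaf_adj (hn : 4 ≤ n) {G : SimpleGraph (V n)} (hG : ubGraph n G) (i j : Fin n) :
    ¬ G.Adj (Sum.inl i) (Sum.inl j) := by
  intro hadj
  obtain ⟨u, hu⟩ := Set.ncard_eq_one.mp (hG.2.2.1 i)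
  obtain ⟨w, hw⟩ := Set.ncard_eq_one.mp (hG.2.2.1 j)
  have hui : u = Sum.inl j := by
    have h1 : Sum.inl j ∈ G.neighborSet (Sum.inl i) := hadj
    rw [hu] at h1
    exact h1.symm
  have hwi : w = Sum.inl i := by
    have h1 : Sum.inl i ∈ G.neighborSet (Sum.inl j) := hadj.symm
    rw [hw] at h1
    exact h1.symm
  set S : Set (V n) := {Sum.inl i, Sum.inl j} with hS
  have hclosed : ∀ u ∈ S, ∀ z, G.Adj u z → z ∈ S := by
    rintro u (rfl | rfl) z hz
    · have : z ∈ G.neighborSet (Sum.inl i) := hz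
      rw [hu, hui] at this
      right; exact this
    · have : z ∈ G.neighborSet (Sum.inl j) := hz
      rw [hw, hwi] at this
      left; exact this
  have hz : (0 : ℕ) < n - 2 := by omega
  set z : V n := Sum.inr ⟨0, hz⟩ with hzdef
  obtain ⟨p⟩ := hG.1.preconnected (Sum.inl i) z
  have hzS : z ∈ S := walk_closed G S hclosed p (by left; rfl)
  rcases hzS with h | h <;> simp [hzdef] at h

lemma leaf_nbr (hn : 4 ≤ n) {G : SimpleGraph (V n)} (hG : ubGraph n G) (i : Fin n) :
    ∃ u, G.neighborSet (Sum.inl i) = {u} ∧ isInternalV u ∧ G.Adj (Sum.inl i) u := by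
  obtain ⟨u, hu⟩ := Set.ncard_eq_one.mp (hG.2.2.1 i)
  have hadj : G.Adj (Sum.inl i) u := by
    have : u ∈ G.neighborSet (Sum.inl i) := by rw [hu]; rfl
    exact this
  refine ⟨u, hu, ?_, hadj⟩
  cases u with
  | inl j => exact absurd hadj (no_leaf_adj hn hG i j)
  | inr j => exact ⟨j, rfl⟩

/-- Internal edges, as a finset. -/
noncomputable def IE (G : SimpleGraph (V n)) : Finset (Sym2 (V n)) :=
  (Set.toFinite {e : Sym2 (V n) | internalEdge G e}).toFinset

lemma mem_IE {G : SimpleGraph (V n)} {e : Sym2 (V n)} : e ∈ IE G ↔ internalEdge G e := by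
  rw [IE, Set.Finite.mem_toFinset]
  rfl

/-- Edges at a vertex, as a finset. -/
noncomputable def EA (G : SimpleGraph (V n)) (v : V n) : Finset (Sym2 (V n)) :=
  (Set.toFinite {e : Sym2 (V n) | e ∈ G.edgeSet ∧ v ∈ e}).toFinset

lemma mem_EA {G : SimpleGraph (V n)} {v : V n} {e : Sym2 (V n)} :
    e ∈ EA G v ↔ e ∈ G.edgeSet ∧ v ∈ e := by
  rw [EA, Set.Finite.mem_toFinset]
  rfl

lemma card_EA {G : SimpleGraph (V n)} (hG : ubGraph n G) (j : Fin (n - 2)) :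
    (EA G (Sum.inr j)).card = 3 := by
  have h1 : (EA G (Sum.inr j)).card
      = ({e : Sym2 (V n) | e ∈ G.edgeSet ∧ Sum.inr j ∈ e}).ncard :=
    (Set.ncard_eq_toFinset_card _ _).symm
  have h2 : {e : Sym2 (V n) | e ∈ G.edgeSet ∧ Sum.inr j ∈ e}
      = G.incidenceSet (Sum.inr j) := rfl
  rw [h1, h2, ← Nat.card_coe_set_eq,
    Nat.card_congr (G.incidenceSetEquivNeighborSet (Sum.inr j)),
    Nat.card_coe_set_eq]
  exact hG.2.2.2 j

lemma card_edgeFinset' (hn : 4 ≤ n) {G : SimpleGraph (V n)} (hG : ubGraph n G) :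
    G.edgeFinset.card = 2 * n - 3 := by
  have ht : G.IsTree := ⟨hG.1, hG.2.1⟩
  have h := ht.card_edgeFinset
  have hc : Fintype.card (V n) = n + (n - 2) := by
    simp [Fintype.card_sum]
  omega

lemma card_IE (hn : 4 ≤ n) {G : SimpleGraph (V n)} (hG : ubGraph n G) :
    (IE G).card = n - 3 := by
  classical
  set LE : Finset (Sym2 (V n)) := G.edgeFinset.filter (fun e => ∃ v ∈ e, isLeafV v) with hLE
  have hIE : IE G = G.edgeFinset \ LE := by
    ext e
    simp only [mem_IE, internalEdge, hLE, Finset.mem_sdiff, Finset.mem_filter,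
      SimpleGraph.mem_edgeFinset, not_and, not_exists]
    constructor
    · rintro ⟨he, hint⟩
      refine ⟨he, fun _ v hv => ?_⟩
      exact fun h => internal_not_leaf (hint v hv) h
    · rintro ⟨he, hne⟩
      exact ⟨he, fun v hv => not_leaf_internal (fun h => hne he v hv h)⟩
  choose u hu1 hu2 hu3 using leaf_nbr hn hG
  have hLEcard : LE.card = n := by
    have hb : (Finset.univ : Finset (Fin n)).card = LE.card := by
      apply Finset.card_bij (fun i _ => s(Sum.inl i, u i))
      · intro i _
        rw [hLE, Finset.mem_filter, SimpleGraph.mem_edgeFinset]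
        exact ⟨(hu3 i), ⟨Sum.inl i, by simp, ⟨i, rfl⟩⟩⟩
      · intro i _ i' _ h
        rw [Sym2.eq_iff] at h
        rcases h with ⟨h1, _⟩ | ⟨h1, h2⟩
        · exact Sum.inl_injective h1
        · exfalso
          obtain ⟨j, hj⟩ := hu2 i'
          rw [hj] at h1
          exact absurd h1.symm (by simp)
      · intro e he
        rw [hLE, Finset.mem_filter, SimpleGraph.mem_edgeFinset] at he
        obtain ⟨he1, v, hv, i, rfl⟩ := he
        refine ⟨i, Finset.mem_univ i, ?_⟩
        have ho := Sym2.other_spec hv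
        have hadj : G.Adj (Sum.inl i) (Sym2.Mem.other hv) := by
          rw [← SimpleGraph.mem_edgeSet, ho]
          exact he1
        have : Sym2.Mem.other hv ∈ G.neighborSet (Sum.inl i) := hadj
        rw [hu1 i] at this
        rw [← ho, this]
    simpa using hb.symm
  have hsub : LE ⊆ G.edgeFinset := Finset.filter_subset _ _
  rw [hIE, Finset.card_sdiff_of_subset hsub, hLEcard, card_edgeFinset' hn hG]
  omega

end EdgeAux

namespace EdgeAux

open Phylo SimpleGraph Finset
open scoped Classical

variable {n : ℕ}

/-- Internal vertices. -/
def ints (n : ℕ) : Finset (V n) := Finset.univ.image Sum.inr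

lemma mem_ints {v : V n} : v ∈ ints n ↔ isInternalV v := by
  simp only [ints, Finset.mem_image, Finset.mem_univ, true_and, isInternalV]
  constructor
  · rintro ⟨j, rfl⟩; exact ⟨j, rfl⟩
  · rintro ⟨j, rfl⟩; exact ⟨j, rfl⟩

lemma card_ints : (ints n).card = n - 2 := by
  rw [ints, Finset.card_image_of_injective _ Sum.inr_injective, Finset.card_univ,
    Fintype.card_fin]

/-- Number of internal edges at a vertex. -/
noncomputable def dI (G : SimpleGraph (V n)) (v : V n) : ℕ :=
  ((IE G).filter (fun e => v ∈ e)).card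

lemma edge_two_endpoints {G : SimpleGraph (V n)} :
    ∀ e ∈ IE G, ∃ a b : V n, a ≠ b ∧ e = s(a, b) ∧ isInternalV a ∧ isInternalV b := by
  intro e
  induction e with
  | _ a b =>
    intro he
    rw [mem_IE] at he
    have hadj : G.Adj a b := he.1
    exact ⟨a, b, hadj.ne, rfl, he.2 a (by simp), he.2 b (by simp)⟩

lemma sum_dI {G : SimpleGraph (V n)} :
    ∑ v ∈ ints n, dI G v = 2 * (IE G).card := by
  classical
  have h1 : ∀ v, dI G v = ∑ e ∈ IE G, if v ∈ e then 1 else 0 := fun v => by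
    rw [dI, Finset.card_filter]
  calc ∑ v ∈ ints n, dI G v
      = ∑ v ∈ ints n, ∑ e ∈ IE G, if v ∈ e then 1 else 0 := by
        exact Finset.sum_congr rfl (fun v _ => h1 v)
    _ = ∑ e ∈ IE G, ∑ v ∈ ints n, if v ∈ e then 1 else 0 := Finset.sum_comm
    _ = ∑ e ∈ IE G, 2 := by
        refine Finset.sum_congr rfl (fun e he => ?_)
        obtain ⟨a, b, hab, rfl, hia, hib⟩ := edge_two_endpoints e he
        rw [← Finset.card_filter]
        have hf : (ints n).filter (fun v => v ∈ s(a, b)) = {a, b} := by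
          ext v
          simp only [Finset.mem_filter, mem_ints, Sym2.mem_iff, Finset.mem_insert,
            Finset.mem_singleton]
          constructor
          · rintro ⟨_, h | h⟩
            · left; exact h
            · right; exact h
          · rintro (rfl | rfl)
            · exact ⟨hia, Or.inl rfl⟩
            · exact ⟨hib, Or.inr rfl⟩
        rw [hf, Finset.card_pair hab]
    _ = 2 * (IE G).card := by
        rw [Finset.sum_const, smul_eq_mul, mul_comm]

/-- Adjacent pairs of internal edges. -/
noncomputable def PR (G : SimpleGraph (V n)) : Finset (Finset (Sym2 (V n))) :=
  ((IE G).powersetCard 2).filter (fun p => ∃ e ∈ p, ∃ f ∈ p, e ≠ f ∧ edgesShare e f)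

lemma share_unique {e f : Sym2 (V n)} (hef : e ≠ f) {v w : V n}
    (hv : v ∈ e) (hv' : v ∈ f) (hw : w ∈ e) (hw' : w ∈ f) : v = w := by
  by_contra h
  exact hef (((Sym2.mem_and_mem_iff h).mp ⟨hv, hw⟩).trans
    ((Sym2.mem_and_mem_iff h).mp ⟨hv', hw'⟩).symm)

lemma PR_eq (G : SimpleGraph (V n)) :
    PR G = (ints n).biUnion (fun v => ((IE G).filter (fun e => v ∈ e)).powersetCard 2) := by
  ext p
  simp only [PR, Finset.mem_filter, Finset.mem_powersetCard, Finset.mem_biUnion]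
  constructor
  · rintro ⟨⟨hsub, hcard⟩, e, he, f, hf, hef, v, hv, hv'⟩
    refine ⟨v, mem_ints.mpr ((mem_IE.mp (hsub he)).2 v hv), ?_, hcard⟩
    have hsub2 : ({e, f} : Finset (Sym2 (V n))) ⊆ p := by
      intro x hx
      rcases Finset.mem_insert.mp hx with rfl | hx
      · exact he
      · rw [Finset.mem_singleton] at hx; subst hx; exact hf
    have hp : p = {e, f} :=
      (Finset.eq_of_subset_of_card_le hsub2
        (le_of_eq (by rw [hcard, Finset.card_pair hef]))).symm
    intro x hx
    rw [hp, Finset.mem_insert, Finset.mem_singleton] at hx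
    rcases hx with rfl | rfl
    · exact Finset.mem_filter.mpr ⟨hsub he, hv⟩
    · exact Finset.mem_filter.mpr ⟨hsub hf, hv'⟩
  · rintro ⟨v, hv, hsub, hcard⟩
    obtain ⟨e, f, hef, hp⟩ := Finset.card_eq_two.mp hcard
    have he : e ∈ p := by rw [hp]; exact Finset.mem_insert_self _ _
    have hf : f ∈ p := by rw [hp]; simp
    have he' := Finset.mem_filter.mp (hsub he)
    have hf' := Finset.mem_filter.mp (hsub hf)
    exact ⟨⟨fun x hx => (Finset.mem_filter.mp (hsub hx)).1, hcard⟩,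
      e, he, f, hf, hef, v, he'.2, hf'.2⟩

lemma card_PR (G : SimpleGraph (V n)) :
    (PR G).card = ∑ v ∈ ints n, (dI G v).choose 2 := by
  rw [PR_eq, Finset.card_biUnion]
  · exact Finset.sum_congr rfl (fun v _ => by
      rw [Finset.card_powersetCard, dI])
  · intro v _ w _ hvw
    simp only [Function.onFun]
    rw [Finset.disjoint_left]
    intro p hp hp'
    rw [Finset.mem_powersetCard] at hp hp'
    obtain ⟨e, f, hef, hpef⟩ := Finset.card_eq_two.mp hp.2
    have he : e ∈ p := by rw [hpef]; exact Finset.mem_insert_self _ _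
    have hf : f ∈ p := by rw [hpef]; simp
    have h1 := (Finset.mem_filter.mp (hp.1 he)).2
    have h2 := (Finset.mem_filter.mp (hp.1 hf)).2
    have h3 := (Finset.mem_filter.mp (hp'.1 he)).2
    have h4 := (Finset.mem_filter.mp (hp'.1 hf)).2
    exact hvw (share_unique hef h1 h2 h3 h4)

lemma dI_le {G : SimpleGraph (V n)} (hG : ubGraph n G) {v : V n} (hv : v ∈ ints n) :
    dI G v ≤ 3 := by
  obtain ⟨j, rfl⟩ := mem_ints.mp hv
  rw [← card_EA hG j]
  apply Finset.card_le_card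
  intro e he
  rw [Finset.mem_filter, mem_IE] at he
  exact mem_EA.mpr ⟨he.1.1, he.2⟩

lemma nat_choose2_le {d : ℕ} (h : d ≤ 3) : d.choose 2 ≤ d := by
  interval_cases d <;> decide

lemma nat_two_mul_le (d : ℕ) : 2 * d ≤ d.choose 2 + 3 := by
  rcases Nat.lt_or_ge d 5 with h | h
  · interval_cases d <;> decide
  · have h2 : d.choose 2 = d * (d - 1) / 2 := Nat.choose_two_right d
    have h3 : 4 * d ≤ d * (d - 1) := by
      obtain ⟨m, rfl⟩ := Nat.exists_eq_add_of_le h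
      have : 5 + m - 1 = 4 + m := by omega
      rw [this]
      calc 4 * (5 + m) ≤ (4 + m) * (5 + m) := Nat.mul_le_mul_right _ (by omega)
        _ = (5 + m) * (4 + m) := Nat.mul_comm _ _
    have h4 : 2 * d ≤ d * (d - 1) / 2 := by omega
    omega

lemma PR_ub (hn : 4 ≤ n) {G : SimpleGraph (V n)} (hG : ubGraph n G) :
    (PR G).card ≤ 2 * (n - 3) := by
  rw [card_PR]
  calc ∑ v ∈ ints n, (dI G v).choose 2 ≤ ∑ v ∈ ints n, dI G v :=
        Finset.sum_le_sum (fun v hv => nat_choose2_le (dI_le hG hv))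
    _ = 2 * (IE G).card := sum_dI
    _ = 2 * (n - 3) := by rw [card_IE hn hG]

lemma PR_lb (hn : 4 ≤ n) {G : SimpleGraph (V n)} (hG : ubGraph n G) :
    4 * (n - 3) ≤ (PR G).card + 3 * (n - 2) := by
  have h1 : 2 * ∑ v ∈ ints n, dI G v ≤ ∑ v ∈ ints n, ((dI G v).choose 2 + 3) := by
    rw [Finset.mul_sum]
    exact Finset.sum_le_sum (fun v _ => nat_two_mul_le (dI G v))
  rw [Finset.sum_add_distrib, Finset.sum_const, sum_dI, card_IE hn hG, ← card_PR,
    smul_eq_mul, card_ints] at h1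
  omega

lemma SH_card {G : SimpleGraph (V n)} (hG : ubGraph n G) {e : Sym2 (V n)} (he : e ∈ IE G) :
    ((IE G).filter (fun g => edgesShare g e)).card ≤ 6 := by
  obtain ⟨a, b, hab, rfl, hia, hib⟩ := edge_two_endpoints e he
  obtain ⟨ja, rfl⟩ := hia
  obtain ⟨jb, rfl⟩ := hib
  have hsub : (IE G).filter (fun g => edgesShare g s(Sum.inr ja, Sum.inr jb)) ⊆
      EA G (Sum.inr ja) ∪ EA G (Sum.inr jb) := by
    intro g hg
    rw [Finset.mem_filter, mem_IE] at hg
    obtain ⟨⟨hg1, hg2⟩, v, hv1, hv2⟩ := hg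
    rw [Sym2.mem_iff] at hv2
    rw [Finset.mem_union, mem_EA, mem_EA]
    rcases hv2 with rfl | rfl
    · left; exact ⟨hg1, hv1⟩
    · right; exact ⟨hg1, hv1⟩
  calc ((IE G).filter (fun g => edgesShare g s(Sum.inr ja, Sum.inr jb))).card
      ≤ (EA G (Sum.inr ja) ∪ EA G (Sum.inr jb)).card := Finset.card_le_card hsub
    _ ≤ (EA G (Sum.inr ja)).card + (EA G (Sum.inr jb)).card := Finset.card_union_le _ _
    _ ≤ 6 := by rw [card_EA hG, card_EA hG]

lemma sharers_card {G : SimpleGraph (V n)} (hG : ubGraph n G) {p : Finset (Sym2 (V n))}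
    (hp : p ∈ PR G) :
    ((IE G).filter (fun g => ∃ e ∈ p, edgesShare g e)).card ≤ 12 := by
  rw [PR, Finset.mem_filter, Finset.mem_powersetCard] at hp
  obtain ⟨⟨hsub, hcard⟩, -⟩ := hp
  obtain ⟨e, f, hef, rfl⟩ := Finset.card_eq_two.mp hcard
  have h1 : (IE G).filter (fun g => ∃ e' ∈ ({e, f} : Finset (Sym2 (V n))), edgesShare g e') ⊆
      (IE G).filter (fun g => edgesShare g e) ∪ (IE G).filter (fun g => edgesShare g f) := by
    intro g hg
    rw [Finset.mem_filter] at hg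
    obtain ⟨hg1, e', he', hsh⟩ := hg
    rw [Finset.mem_insert, Finset.mem_singleton] at he'
    rw [Finset.mem_union, Finset.mem_filter, Finset.mem_filter]
    rcases he' with rfl | rfl
    · left; exact ⟨hg1, hsh⟩
    · right; exact ⟨hg1, hsh⟩
  have he : e ∈ IE G := hsub (by simp)
  have hf : f ∈ IE G := hsub (by simp)
  have h2 := SH_card hG he
  have h3 := SH_card hG hf
  calc ((IE G).filter (fun g => ∃ e' ∈ ({e, f} : Finset (Sym2 (V n))), edgesShare g e')).card
      ≤ ((IE G).filter (fun g => edgesShare g e) ∪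
          (IE G).filter (fun g => edgesShare g f)).card := Finset.card_le_card h1
    _ ≤ ((IE G).filter (fun g => edgesShare g e)).card +
          ((IE G).filter (fun g => edgesShare g f)).card := Finset.card_union_le _ _
    _ ≤ 12 := by omega

end EdgeAux

namespace EdgeAux

open Phylo SimpleGraph Finset
open scoped Classical

variable {n : ℕ}

lemma edgesShare_symm {e f : Sym2 (V n)} (h : edgesShare e f) : edgesShare f e := by
  obtain ⟨v, h1, h2⟩ := h
  exact ⟨v, h2, h1⟩

/-- all k-subsets of internal edges -/
noncomputable def KK (G : SimpleGraph (V n)) (k : ℕ) : Finset (Finset (Sym2 (V n))) :=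
  (IE G).powersetCard k

noncomputable def AF (G : SimpleGraph (V n)) (k : ℕ) : Finset (Finset (Sym2 (V n))) :=
  (KK G k).filter (fun s => ∀ e ∈ s, ∀ f ∈ s, e ≠ f → ¬ edgesShare e f)

noncomputable def BF (G : SimpleGraph (V n)) (k : ℕ) : Finset (Finset (Sym2 (V n))) :=
  (KK G k).filter (fun s => ∃ e ∈ s, ∃ f ∈ s, e ≠ f ∧ edgesShare e f ∧
    ∀ e' ∈ s, ∀ f' ∈ s, e' ≠ f' → edgesShare e' f' →
      (e' = e ∧ f' = f) ∨ (e' = f ∧ f' = e))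

lemma mem_KK_iff {G : SimpleGraph (V n)} {k : ℕ} {s : Finset (Sym2 (V n))} :
    s ∈ KK G k ↔ s.card = k ∧ ∀ e ∈ s, internalEdge G e := by
  rw [KK, Finset.mem_powersetCard]
  constructor
  · rintro ⟨hsub, hcard⟩
    exact ⟨hcard, fun e he => mem_IE.mp (hsub he)⟩
  · rintro ⟨hcard, hint⟩
    exact ⟨fun e he => mem_IE.mpr (hint e he), hcard⟩

lemma Aset_card {G : SimpleGraph (V n)} {k : ℕ} :
    (Aset n k G).ncard = (AF G k).card := by
  have h : Aset n k G = ↑(AF G k) := by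
    ext s
    rw [Finset.mem_coe, AF, Finset.mem_filter, mem_KK_iff]
    constructor
    · rintro ⟨h1, h2, h3⟩; exact ⟨⟨h1, h2⟩, h3⟩
    · rintro ⟨⟨h1, h2⟩, h3⟩; exact ⟨h1, h2, h3⟩
  rw [h, Set.ncard_coe_finset]

lemma Bset_card {G : SimpleGraph (V n)} {k : ℕ} :
    (Bset n k G).ncard = (BF G k).card := by
  have h : Bset n k G = ↑(BF G k) := by
    ext s
    rw [Finset.mem_coe, BF, Finset.mem_filter, mem_KK_iff]
    constructor
    · rintro ⟨h1, h2, h3⟩; exact ⟨⟨h1, h2⟩, h3⟩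
    · rintro ⟨⟨h1, h2⟩, h3⟩; exact ⟨h1, h2, h3⟩
  rw [h, Set.ncard_coe_finset]

lemma AF_one (G : SimpleGraph (V n)) : AF G 1 = KK G 1 := by
  rw [AF]
  apply Finset.filter_true_of_mem
  intro s hs
  rw [KK, Finset.mem_powersetCard] at hs
  obtain ⟨a, ha⟩ := Finset.card_eq_one.mp hs.2
  intro e he f hf hef
  rw [ha, Finset.mem_singleton] at he hf
  exact absurd (he.trans hf.symm) hef

/-- extraction of the two edges of a pair -/
lemma PR_pair {G : SimpleGraph (V n)} {p : Finset (Sym2 (V n))} (hp : p ∈ PR G) :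
    ∃ e f, e ≠ f ∧ edgesShare e f ∧ p = {e, f} ∧ e ∈ IE G ∧ f ∈ IE G := by
  rw [PR, Finset.mem_filter, Finset.mem_powersetCard] at hp
  obtain ⟨⟨hsub, hcard⟩, e', he', f', hf', hne, hsh⟩ := hp
  obtain ⟨a, b, hab, hpab⟩ := Finset.card_eq_two.mp hcard
  have ha : a ∈ p := by rw [hpab]; exact Finset.mem_insert_self _ _
  have hb : b ∈ p := by rw [hpab]; simp
  have hmem : ∀ x ∈ p, x = a ∨ x = b := by
    intro x hx
    rw [hpab, Finset.mem_insert, Finset.mem_singleton] at hx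
    exact hx
  rcases hmem e' he' with h1 | h1 <;> rcases hmem f' hf' with h2 | h2
  · exact absurd (h1.trans h2.symm) hne
  · rw [h1, h2] at hsh
    exact ⟨a, b, hab, hsh, hpab, hsub ha, hsub hb⟩
  · rw [h1, h2] at hsh
    exact ⟨a, b, hab, edgesShare_symm hsh, hpab, hsub ha, hsub hb⟩
  · exact absurd (h1.trans h2.symm) hne

/-- A-lower-bound inequality. -/
lemma KK_le_AF (hn : 4 ≤ n) {G : SimpleGraph (V n)} (hG : ubGraph n G) (k : ℕ) :
    (KK G k).card ≤ (AF G k).card + (PR G).card * ((n - 3).choose (k - 2)) := by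
  have hsub : KK G k \ AF G k ⊆
      (PR G).biUnion (fun p => (KK G k).filter (fun s => p ⊆ s)) := by
    intro s hs
    rw [Finset.mem_sdiff] at hs
    obtain ⟨hsK, hsA⟩ := hs
    rw [AF, Finset.mem_filter] at hsA
    push_neg at hsA
    obtain ⟨e, he, f, hf, hef, hsh⟩ := hsA hsK
    rw [Finset.mem_biUnion]
    have hsIE : s ⊆ IE G := by
      rw [KK, Finset.mem_powersetCard] at hsK
      exact hsK.1
    refine ⟨{e, f}, ?_, ?_⟩
    · rw [PR, Finset.mem_filter, Finset.mem_powersetCard]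
      refine ⟨⟨?_, Finset.card_pair hef⟩, e, by simp, f, by simp, hef, hsh⟩
      intro x hx
      rw [Finset.mem_insert, Finset.mem_singleton] at hx
      rcases hx with rfl | rfl
      · exact hsIE he
      · exact hsIE hf
    · rw [Finset.mem_filter]
      exact ⟨hsK, Finset.insert_subset he (Finset.singleton_subset_iff.mpr hf)⟩
  have h1 : (KK G k \ AF G k).card ≤ (PR G).card * ((n - 3).choose (k - 2)) := by
    calc (KK G k \ AF G k).card
        ≤ ((PR G).biUnion (fun p => (KK G k).filter (fun s => p ⊆ s))).card :=
          Finset.card_le_card hsub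
      _ ≤ ∑ p ∈ PR G, ((KK G k).filter (fun s => p ⊆ s)).card :=
          Finset.card_biUnion_le
      _ ≤ ∑ p ∈ PR G, (n - 3).choose (k - 2) := by
          refine Finset.sum_le_sum (fun p hp => ?_)
          obtain ⟨e, f, hef, _, rfl, _, _⟩ := PR_pair hp
          have h3 := filter_superset_card_le (IE G) k {e, f}
          rw [Finset.card_pair hef, card_IE hn hG] at h3
          exact h3
      _ = (PR G).card * ((n - 3).choose (k - 2)) := by
          rw [Finset.sum_const, smul_eq_mul]
  have hle : (AF G k).card ≤ (KK G k).card :=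
    Finset.card_le_card (Finset.filter_subset _ _)
  have h2 : (KK G k \ AF G k).card = (KK G k).card - (AF G k).card :=
    Finset.card_sdiff_of_subset (Finset.filter_subset _ _)
  omega

/-- A + B disjointness. -/
lemma AF_add_BF_le (G : SimpleGraph (V n)) (k : ℕ) :
    (AF G k).card + (BF G k).card ≤ (KK G k).card := by
  rw [← Finset.card_union_of_disjoint]
  · exact Finset.card_le_card (Finset.union_subset (Finset.filter_subset _ _)
      (Finset.filter_subset _ _))
  · rw [Finset.disjoint_left]
    intro s hsA hsB
    rw [AF, Finset.mem_filter] at hsA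
    rw [BF, Finset.mem_filter] at hsB
    obtain ⟨e, he, f, hf, hef, hsh, _⟩ := hsB.2
    exact hsA.2 e he f hf hef hsh

/-- The canonical sharing pair of a set. -/
noncomputable def SP (s : Finset (Sym2 (V n))) : Finset (Sym2 (V n)) :=
  s.filter (fun e => ∃ f ∈ s, f ≠ e ∧ edgesShare e f)

lemma SP_eq {G : SimpleGraph (V n)} {k : ℕ} {s : Finset (Sym2 (V n))} (hs : s ∈ BF G k)
    {e f : Sym2 (V n)} (he : e ∈ s) (hf : f ∈ s) (hef : e ≠ f) (hsh : edgesShare e f)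
    (huniq : ∀ e' ∈ s, ∀ f' ∈ s, e' ≠ f' → edgesShare e' f' →
      (e' = e ∧ f' = f) ∨ (e' = f ∧ f' = e)) :
    SP s = {e, f} := by
  ext g
  rw [SP, Finset.mem_filter, Finset.mem_insert, Finset.mem_singleton]
  constructor
  · rintro ⟨hg, h, hh, hne, hgh⟩
    rcases huniq g hg h hh (Ne.symm hne) hgh with ⟨rfl, _⟩ | ⟨rfl, _⟩
    · left; rfl
    · right; rfl
  · rintro (rfl | rfl)
    · exact ⟨he, f, hf, Ne.symm hef, hsh⟩
    · exact ⟨hf, e, he, hef, edgesShare_symm hsh⟩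

/-- B upper bound. -/
lemma BF_ub (hn : 4 ≤ n) {G : SimpleGraph (V n)} (hG : ubGraph n G) {k : ℕ} (hk : 2 ≤ k) :
    (BF G k).card ≤ (PR G).card * ((n - 3).choose (k - 2)) := by
  have h := Finset.card_le_card_of_injOn
    (f := fun s => (SP s, s \ SP s))
    (s := BF G k) (t := (PR G) ×ˢ ((IE G).powersetCard (k - 2))) ?_ ?_
  · calc (BF G k).card ≤ _ := h
      _ = (PR G).card * ((n - 3).choose (k - 2)) := by
        rw [Finset.card_product, Finset.card_powersetCard, card_IE hn hG]
  · intro s hs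
    have hs' := hs
    rw [Finset.mem_coe, BF, Finset.mem_filter] at hs'
    obtain ⟨hsK, e, he, f, hf, hef, hsh, huniq⟩ := hs'
    have hSP := SP_eq hs he hf hef hsh huniq
    rw [KK, Finset.mem_powersetCard] at hsK
    rw [Finset.mem_coe, Finset.mem_product]
    refine ⟨?_, ?_⟩
    · show SP s ∈ PR G
      rw [hSP, PR, Finset.mem_filter, Finset.mem_powersetCard]
      refine ⟨⟨?_, Finset.card_pair hef⟩, e, by simp, f, by simp, hef, hsh⟩
      intro x hx
      rw [Finset.mem_insert, Finset.mem_singleton] at hx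
      rcases hx with rfl | rfl
      · exact hsK.1 he
      · exact hsK.1 hf
    · show s \ SP s ∈ (IE G).powersetCard (k - 2)
      rw [Finset.mem_powersetCard]
      have hsub : SP s ⊆ s := Finset.filter_subset _ _
      refine ⟨(Finset.sdiff_subset).trans hsK.1, ?_⟩
      rw [Finset.card_sdiff_of_subset hsub, hSP, Finset.card_pair hef, hsK.2]
  · intro s hs t ht hst
    simp only [Prod.mk.injEq] at hst
    have h1 : s = (s \ SP s) ∪ SP s :=
      (Finset.sdiff_union_of_subset (Finset.filter_subset _ _)).symm
    have h2 : t = (t \ SP t) ∪ SP t :=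
      (Finset.sdiff_union_of_subset (Finset.filter_subset _ _)).symm
    rw [h1, h2, hst.2, hst.1]

end EdgeAux

namespace EdgeAux

open Phylo SimpleGraph Finset
open scoped Classical

variable {n : ℕ}

noncomputable def good (G : SimpleGraph (V n)) (k : ℕ) (p : Finset (Sym2 (V n))) :
    Finset (Finset (Sym2 (V n))) :=
  ((IE G \ p).powersetCard (k - 2)).filter
    (fun t => (∀ e ∈ t, ∀ f ∈ t, e ≠ f → ¬ edgesShare e f) ∧
      ∀ g ∈ t, ∀ e ∈ p, ¬ edgesShare g e)

lemma BF_pair_unique {G : SimpleGraph (V n)} {k : ℕ} {s : Finset (Sym2 (V n))}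
    (hs : s ∈ BF G k) {q q' : Finset (Sym2 (V n))} (hq : q ∈ PR G) (hqs : q ⊆ s)
    (hq' : q' ∈ PR G) (hqs' : q' ⊆ s) : q = q' := by
  rw [BF, Finset.mem_filter] at hs
  obtain ⟨-, e, he, f, hf, hef, hsh, huniq⟩ := hs
  have key : ∀ r, r ∈ PR G → r ⊆ s → r = {e, f} := by
    intro r hr hrs
    obtain ⟨a, b, hab, hshab, rfl, -, -⟩ := PR_pair hr
    have ha : a ∈ s := hrs (Finset.mem_insert_self _ _)
    have hb : b ∈ s := hrs (by simp)
    rcases huniq a ha b hb hab hshab with ⟨rfl, rfl⟩ | ⟨rfl, rfl⟩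
    · rfl
    · exact Finset.pair_comm _ _
  rw [key q hq hqs, key q' hq' hqs']

lemma good_union_mem (hn : 4 ≤ n) {G : SimpleGraph (V n)} (hG : ubGraph n G) {k : ℕ}
    (hk : 2 ≤ k) {p t : Finset (Sym2 (V n))} (hp : p ∈ PR G) (ht : t ∈ good G k p) :
    (p ∪ t) ∈ BF G k ∧ Disjoint p t := by
  obtain ⟨e, f, hef, hsh, hpef, heI, hfI⟩ := PR_pair hp
  rw [good, Finset.mem_filter, Finset.mem_powersetCard] at ht
  obtain ⟨⟨htsub, htcard⟩, hA, hB⟩ := ht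
  have hdisj : Disjoint p t := by
    rw [Finset.disjoint_left]
    intro x hxp hxt
    exact (Finset.mem_sdiff.mp (htsub hxt)).2 hxp
  have hpcard : p.card = 2 := by rw [hpef]; exact Finset.card_pair hef
  have hep : e ∈ p := by rw [hpef]; exact Finset.mem_insert_self _ _
  have hfp : f ∈ p := by rw [hpef]; simp
  refine ⟨?_, hdisj⟩
  rw [BF, Finset.mem_filter, mem_KK_iff]
  refine ⟨⟨?_, ?_⟩, e, Finset.mem_union_left _ hep, f, Finset.mem_union_left _ hfp,
    hef, hsh, ?_⟩
  · rw [Finset.card_union_of_disjoint hdisj, hpcard, htcard]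
    omega
  · intro g hg
    rcases Finset.mem_union.mp hg with hgp | hgt
    · rw [hpef, Finset.mem_insert, Finset.mem_singleton] at hgp
      rcases hgp with rfl | rfl
      · exact mem_IE.mp heI
      · exact mem_IE.mp hfI
    · exact mem_IE.mp ((Finset.mem_sdiff.mp (htsub hgt)).1)
  · intro e' he' f' hf' hne hsh'
    rcases Finset.mem_union.mp he' with he'p | he't
    · rcases Finset.mem_union.mp hf' with hf'p | hf't
      · rw [hpef, Finset.mem_insert, Finset.mem_singleton] at he'p hf'p
        rcases he'p with rfl | rfl <;> rcases hf'p with rfl | rfl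
        · exact absurd rfl hne
        · exact Or.inl ⟨rfl, rfl⟩
        · exact Or.inr ⟨rfl, rfl⟩
        · exact absurd rfl hne
      · exact absurd (edgesShare_symm hsh') (hB f' hf't e' he'p)
    · rcases Finset.mem_union.mp hf' with hf'p | hf't
      · exact absurd hsh' (hB e' he't f' hf'p)
      · exact absurd hsh' (hA e' he't f' hf't hne)

lemma BF_lb (hn : 4 ≤ n) {G : SimpleGraph (V n)} (hG : ubGraph n G) {k : ℕ} (hk : 2 ≤ k) :
    ∑ p ∈ PR G, (good G k p).card ≤ (BF G k).card := by
  have h := Finset.card_le_card_of_injOn (f := fun q : Σ _ : Finset (Sym2 (V n)),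
      Finset (Sym2 (V n)) => q.1 ∪ q.2)
    (s := (PR G).sigma (fun p => good G k p)) (t := BF G k) ?_ ?_
  · rw [Finset.card_sigma] at h
    exact h
  · rintro ⟨p, t⟩ hpt
    rw [Finset.mem_coe, Finset.mem_sigma] at hpt
    exact (good_union_mem hn hG hk hpt.1 hpt.2).1
  · rintro ⟨p, t⟩ hpt ⟨p', t'⟩ hpt' h
    rw [Finset.mem_coe, Finset.mem_sigma] at hpt hpt'
    obtain ⟨hmem, hd⟩ := good_union_mem hn hG hk hpt.1 hpt.2
    obtain ⟨hmem', hd'⟩ := good_union_mem hn hG hk hpt'.1 hpt'.2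
    have hpp : p = p' := by
      refine BF_pair_unique hmem hpt.1 Finset.subset_union_left hpt'.1 ?_
      show p' ⊆ p ∪ t
      rw [show p ∪ t = p' ∪ t' from h]
      exact Finset.subset_union_left
    have htt : t = t' := by
      have e1 : t = (p ∪ t) \ p := (Finset.union_sdiff_cancel_left hd).symm
      have e2 : t' = (p' ∪ t') \ p' := (Finset.union_sdiff_cancel_left hd').symm
      rw [e1, e2, hpp, show p' ∪ t = p' ∪ t' from hpp ▸ h]
    subst hpp
    subst htt
    rfl

lemma good_lb (hn : 4 ≤ n) {G : SimpleGraph (V n)} (hG : ubGraph n G) {k : ℕ}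
    (hk : 2 ≤ k) {p : Finset (Sym2 (V n))} (hp : p ∈ PR G) :
    (n - 5).choose (k - 2) ≤ (good G k p).card
      + (PR G).card * (if 4 ≤ k then (n - 5).choose (k - 4) else 0)
      + 12 * (if 3 ≤ k then (n - 5).choose (k - 3) else 0) := by
  obtain ⟨e₀, f₀, hef₀, hsh₀, hpef₀, heI₀, hfI₀⟩ := PR_pair hp
  have hpsub : p ⊆ IE G := by
    intro x hx
    rw [hpef₀, Finset.mem_insert, Finset.mem_singleton] at hx
    rcases hx with rfl | rfl
    · exact heI₀
    · exact hfI₀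
  have hJcard : (IE G \ p).card = n - 5 := by
    rw [Finset.card_sdiff_of_subset hpsub, card_IE hn hG, hpef₀, Finset.card_pair hef₀]
    omega
  set J := IE G \ p with hJ
  set pcs := J.powersetCard (k - 2) with hpcsdef
  have hpcs : pcs.card = (n - 5).choose (k - 2) := by
    rw [hpcsdef, Finset.card_powersetCard, hJcard]
  set SHR := (IE G).filter (fun g => ∃ e ∈ p, edgesShare g e) with hSHR
  have hcover : pcs ⊆ (good G k p
      ∪ ((PR G).biUnion (fun q => pcs.filter (fun t => q ⊆ t))))
      ∪ (SHR.biUnion (fun g => pcs.filter (fun t => g ∈ t))) := by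
    intro t ht
    by_cases h1 : (∀ e ∈ t, ∀ f ∈ t, e ≠ f → ¬ edgesShare e f) ∧
        ∀ g ∈ t, ∀ e ∈ p, ¬ edgesShare g e
    · exact Finset.mem_union_left _ (Finset.mem_union_left _
        (Finset.mem_filter.mpr ⟨ht, h1⟩))
    · have htJ : t ⊆ J := (Finset.mem_powersetCard.mp ht).1
      rw [not_and_or] at h1
      rcases h1 with h1 | h1
      · push_neg at h1
        obtain ⟨e, he, f, hf, hef, hsh⟩ := h1
        refine Finset.mem_union_left _ (Finset.mem_union_right _ ?_)
        rw [Finset.mem_biUnion]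
        refine ⟨{e, f}, ?_, Finset.mem_filter.mpr ⟨ht,
          Finset.insert_subset he (Finset.singleton_subset_iff.mpr hf)⟩⟩
        rw [PR, Finset.mem_filter, Finset.mem_powersetCard]
        refine ⟨⟨?_, Finset.card_pair hef⟩, e, by simp, f, by simp, hef, hsh⟩
        intro x hx
        rw [Finset.mem_insert, Finset.mem_singleton] at hx
        rcases hx with rfl | rfl
        · exact (Finset.mem_sdiff.mp (htJ he)).1
        · exact (Finset.mem_sdiff.mp (htJ hf)).1
      · push_neg at h1
        obtain ⟨g, hg, e, he, hsh⟩ := h1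
        refine Finset.mem_union_right _ ?_
        rw [Finset.mem_biUnion]
        refine ⟨g, ?_, Finset.mem_filter.mpr ⟨ht, hg⟩⟩
        rw [hSHR, Finset.mem_filter]
        exact ⟨(Finset.mem_sdiff.mp (htJ hg)).1, e, he, hsh⟩
  have hq_bound : ∀ q ∈ PR G, (pcs.filter (fun t => q ⊆ t)).card ≤
      (if 4 ≤ k then (n - 5).choose (k - 4) else 0) := by
    intro q hq
    obtain ⟨e, f, hef, -, rfl, -, -⟩ := PR_pair hq
    rcases le_or_gt 4 k with h4 | h4
    · rw [if_pos h4]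
      have h5 := filter_superset_card_le J (k - 2) {e, f}
      rw [Finset.card_pair hef, hJcard, ← hpcsdef] at h5
      have h6 : k - 2 - 2 = k - 4 := by omega
      rw [h6] at h5
      exact h5
    · rw [if_neg (by omega)]
      have h5 := filter_superset_empty J (k - 2) {e, f}
        (by rw [Finset.card_pair hef]; omega)
      rw [← hpcsdef] at h5
      omega
  have hg_bound : ∀ g ∈ SHR, (pcs.filter (fun t => g ∈ t)).card ≤
      (if 3 ≤ k then (n - 5).choose (k - 3) else 0) := by
    intro g _
    have hfe : pcs.filter (fun t => g ∈ t) = pcs.filter (fun t => {g} ⊆ t) :=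
      Finset.filter_congr (fun t _ => by rw [Finset.singleton_subset_iff])
    rcases le_or_gt 3 k with h3 | h3
    · rw [if_pos h3, hfe]
      have h5 := filter_superset_card_le J (k - 2) {g}
      rw [Finset.card_singleton, hJcard, ← hpcsdef] at h5
      have h6 : k - 2 - 1 = k - 3 := by omega
      rw [h6] at h5
      exact h5
    · rw [if_neg (by omega), hfe]
      have h5 := filter_superset_empty J (k - 2) {g}
        (by rw [Finset.card_singleton]; omega)
      rw [← hpcsdef] at h5
      omega
  have hSHRcard : SHR.card ≤ 12 := sharers_card hG hp
  have c1 : pcs.card ≤ (good G k p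
      ∪ ((PR G).biUnion (fun q => pcs.filter (fun t => q ⊆ t)))).card
      + (SHR.biUnion (fun g => pcs.filter (fun t => g ∈ t))).card :=
    le_trans (Finset.card_le_card hcover) (Finset.card_union_le _ _)
  have c2 : (good G k p ∪ ((PR G).biUnion (fun q => pcs.filter (fun t => q ⊆ t)))).card ≤
      (good G k p).card + ((PR G).biUnion (fun q => pcs.filter (fun t => q ⊆ t))).card :=
    Finset.card_union_le _ _
  have c3 : ((PR G).biUnion (fun q => pcs.filter (fun t => q ⊆ t))).card ≤
      (PR G).card * (if 4 ≤ k then (n - 5).choose (k - 4) else 0) := by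
    refine le_trans Finset.card_biUnion_le ?_
    calc ∑ q ∈ PR G, (pcs.filter (fun t => q ⊆ t)).card
        ≤ ∑ q ∈ PR G, (if 4 ≤ k then (n - 5).choose (k - 4) else 0) :=
          Finset.sum_le_sum hq_bound
      _ = _ := by rw [Finset.sum_const, smul_eq_mul]
  have c4 : (SHR.biUnion (fun g => pcs.filter (fun t => g ∈ t))).card ≤
      12 * (if 3 ≤ k then (n - 5).choose (k - 3) else 0) := by
    refine le_trans Finset.card_biUnion_le ?_
    calc ∑ g ∈ SHR, (pcs.filter (fun t => g ∈ t)).card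
        ≤ ∑ g ∈ SHR, (if 3 ≤ k then (n - 5).choose (k - 3) else 0) :=
          Finset.sum_le_sum hg_bound
      _ = SHR.card * (if 3 ≤ k then (n - 5).choose (k - 3) else 0) := by
          rw [Finset.sum_const, smul_eq_mul]
      _ ≤ _ := Nat.mul_le_mul_right _ hSHRcard
  omega

end EdgeAux

namespace EdgeAux

open Phylo SimpleGraph Finset
open scoped Classical

variable {n : ℕ}

/-- Real-valued lower bound for the number of pairs. -/
lemma P_real_lb (hn : 4 ≤ n) {G : SimpleGraph (V n)} (hG : ubGraph n G) :
    (n : ℝ) - 6 ≤ ((PR G).card : ℝ) := by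
  have h := PR_lb hn hG
  have h4 : ((4 * (n - 3) : ℕ) : ℝ) ≤ (((PR G).card + 3 * (n - 2) : ℕ) : ℝ) :=
    Nat.cast_le.mpr h
  push_cast [Nat.cast_sub (by omega : 3 ≤ n), Nat.cast_sub (by omega : 2 ≤ n)] at h4
  linarith

lemma P_real_ub (hn : 4 ≤ n) {G : SimpleGraph (V n)} (hG : ubGraph n G) :
    ((PR G).card : ℝ) ≤ 2 * ((n : ℝ) - 3) := by
  have h := PR_ub hn hG
  have h4 : (((PR G).card : ℕ) : ℝ) ≤ ((2 * (n - 3) : ℕ) : ℝ) := Nat.cast_le.mpr h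
  push_cast [Nat.cast_sub (by omega : 3 ≤ n)] at h4
  linarith

set_option maxHeartbeats 1000000 in
lemma B_real_lb (hn : 4 ≤ n) (hn6 : 6 ≤ n) {G : SimpleGraph (V n)} (hG : ubGraph n G)
    (m : ℕ) (hkn : m + 2 ≤ n - 3) :
    (n : ℝ) ^ (m + 1) / (m.factorial : ℝ) - (5 * ((m:ℝ)+2) + ((m:ℝ)+2)^2 + 40) * (n : ℝ) ^ m
      ≤ ((BF G (m + 2)).card : ℝ) := by
  have hx0 : (0:ℝ) < (n:ℝ) := by positivity
  have hx4 : (4:ℝ) ≤ (n:ℝ) := by exact_mod_cast hn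
  have hx6 : (6:ℝ) ≤ (n:ℝ) := by exact_mod_cast hn6
  have hF1 : (1:ℝ) ≤ (m.factorial : ℝ) := by exact_mod_cast m.factorial_pos
  have hF0 : (0:ℝ) < (m.factorial : ℝ) := by linarith
  obtain ⟨b1, hb1⟩ : ∃ b : ℕ, b = if 4 ≤ m + 2 then (n - 5).choose (m + 2 - 4) else 0 :=
    ⟨_, rfl⟩
  obtain ⟨b2, hb2⟩ : ∃ b : ℕ, b = if 3 ≤ m + 2 then (n - 5).choose (m + 2 - 3) else 0 :=
    ⟨_, rfl⟩
  -- ℕ chain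
  have hN : (PR G).card * ((n - 5).choose m) ≤ (BF G (m+2)).card
      + (PR G).card * ((PR G).card * b1 + 12 * b2) := by
    have h1 : ∀ p ∈ PR G, (n - 5).choose m ≤ (good G (m+2) p).card
        + ((PR G).card * b1 + 12 * b2) := by
      intro p hp
      have h0 := good_lb hn hG (show 2 ≤ m + 2 by omega) hp
      rw [show m + 2 - 2 = m by omega, ← hb1, ← hb2] at h0
      omega
    have h2 : ∑ _p ∈ PR G, (n - 5).choose m ≤
        ∑ p ∈ PR G, ((good G (m+2) p).card + ((PR G).card * b1 + 12 * b2)) :=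
      Finset.sum_le_sum h1
    rw [Finset.sum_const, smul_eq_mul, Finset.sum_add_distrib, Finset.sum_const,
      smul_eq_mul] at h2
    have h3 := BF_lb hn hG (show 2 ≤ m + 2 by omega)
    omega
  have hP0 : (0:ℝ) ≤ ((PR G).card : ℝ) := by positivity
  have hPlb : (n:ℝ) - 6 ≤ ((PR G).card : ℝ) := P_real_lb hn hG
  have hPub : ((PR G).card : ℝ) ≤ 2 * ((n:ℝ) - 3) := P_real_ub hn hG
  have hPub' : ((PR G).card : ℝ) ≤ 2 * (n:ℝ) := by linarith
  have hC20 : (0:ℝ) ≤ (((n - 5).choose m : ℕ) : ℝ) := by positivity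
  have hcast : ((PR G).card : ℝ) * (((n - 5).choose m : ℕ) : ℝ) ≤
      ((BF G (m+2)).card : ℝ) +
        ((PR G).card : ℝ) * (((PR G).card : ℝ) * (b1:ℝ) + 12 * (b2:ℝ)) := by
    exact_mod_cast hN
  -- bound the error term
  have herr : ((PR G).card : ℝ) * (((PR G).card : ℝ) * (b1:ℝ) + 12 * (b2:ℝ)) ≤
      28 * (n:ℝ) ^ m := by
    rcases Nat.lt_or_ge m 1 with hm1 | hm1
    · have hm : m = 0 := by omega
      subst hm
      have e1 : b1 = 0 := by rw [hb1]; norm_num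
      have e2 : b2 = 0 := by rw [hb2]; norm_num
      rw [e1, e2]
      norm_num
    · rcases Nat.lt_or_ge m 2 with hm2 | hm2
      · have hm : m = 1 := by omega
        subst hm
        have e1 : b1 = 0 := by rw [hb1]; norm_num
        have e2 : b2 = 1 := by rw [hb2]; norm_num
        rw [e1, e2]
        have h6 : ((PR G).card : ℝ) * (((PR G).card : ℝ) * ((0:ℕ):ℝ) + 12 * ((1:ℕ):ℝ))
            = 12 * ((PR G).card : ℝ) := by push_cast; ring
        rw [h6]
        calc 12 * ((PR G).card : ℝ) ≤ 12 * (2 * (n:ℝ)) := by linarith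
          _ ≤ 28 * (n:ℝ) ^ 1 := by rw [pow_one]; linarith
      · -- m ≥ 2
        have e1 : (b1:ℝ) = (((n - 5).choose (m - 2) : ℕ) : ℝ) := by
          rw [hb1, if_pos (by omega : 4 ≤ m + 2), show m + 2 - 4 = m - 2 by omega]
        have e2 : (b2:ℝ) = (((n - 5).choose (m - 1) : ℕ) : ℝ) := by
          rw [hb2, if_pos (by omega : 3 ≤ m + 2), show m + 2 - 3 = m - 1 by omega]
        have hB1ub : (b1:ℝ) ≤ (n:ℝ) ^ (m - 2) := by
          rw [e1]
          have h5 := choose_ub_pow (n - 5) (m - 2) n (by omega)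
          have hf1 : (1:ℝ) ≤ ((m-2).factorial : ℝ) := by
            exact_mod_cast (m-2).factorial_pos
          nlinarith [Nat.cast_nonneg (α := ℝ) ((n - 5).choose (m - 2))]
        have hB2ub : (b2:ℝ) ≤ (n:ℝ) ^ (m - 1) := by
          rw [e2]
          have h5 := choose_ub_pow (n - 5) (m - 1) n (by omega)
          have hf1 : (1:ℝ) ≤ ((m-1).factorial : ℝ) := by
            exact_mod_cast (m-1).factorial_pos
          nlinarith [Nat.cast_nonneg (α := ℝ) ((n - 5).choose (m - 1))]
        have hB10 : (0:ℝ) ≤ (b1:ℝ) := Nat.cast_nonneg b1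
        have hB20 : (0:ℝ) ≤ (b2:ℝ) := Nat.cast_nonneg b2
        have hxm2 : (n:ℝ) * ((n:ℝ) * (n:ℝ) ^ (m - 2)) = (n:ℝ) ^ m := by
          rw [← pow_succ', ← pow_succ']
          congr 1
          omega
        have hxm1 : (n:ℝ) * (n:ℝ) ^ (m - 1) = (n:ℝ) ^ m := by
          rw [← pow_succ']
          congr 1
          omega
        have hp1 : (0:ℝ) ≤ (n:ℝ) ^ (m-2) := by positivity
        have hp2 : (0:ℝ) ≤ (n:ℝ) ^ (m-1) := by positivity
        have hin0 : (0:ℝ) ≤ ((PR G).card : ℝ) * (b1:ℝ) + 12 * (b2:ℝ) :=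
          add_nonneg (mul_nonneg hP0 hB10) (by linarith)
        have s1 : ((PR G).card : ℝ) * (((PR G).card : ℝ) * (b1:ℝ) + 12 * (b2:ℝ)) ≤
            (2*(n:ℝ)) * (((PR G).card : ℝ) * (b1:ℝ) + 12 * (b2:ℝ)) :=
          mul_le_mul_of_nonneg_right hPub' hin0
        have s2 : ((PR G).card : ℝ) * (b1:ℝ) + 12 * (b2:ℝ) ≤
            (2*(n:ℝ)) * (n:ℝ)^(m-2) + 12 * (n:ℝ)^(m-1) := by
          have t1 : ((PR G).card : ℝ) * (b1:ℝ) ≤ (2*(n:ℝ)) * (b1:ℝ) :=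
            mul_le_mul_of_nonneg_right hPub' hB10
          have t2 : (2*(n:ℝ)) * (b1:ℝ) ≤ (2*(n:ℝ)) * (n:ℝ)^(m-2) :=
            mul_le_mul_of_nonneg_left hB1ub (by linarith)
          linarith
        have s3 : (2*(n:ℝ)) * (((PR G).card : ℝ) * (b1:ℝ) + 12 * (b2:ℝ)) ≤
            (2*(n:ℝ)) * ((2*(n:ℝ)) * (n:ℝ)^(m-2) + 12 * (n:ℝ)^(m-1)) :=
          mul_le_mul_of_nonneg_left s2 (by linarith)
        have s4 : (2*(n:ℝ)) * ((2*(n:ℝ)) * (n:ℝ)^(m-2) + 12 * (n:ℝ)^(m-1))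
            = 4 * ((n:ℝ) * ((n:ℝ) * (n:ℝ)^(m-2))) + 24 * ((n:ℝ) * (n:ℝ)^(m-1)) := by
          ring
        rw [s4, hxm2, hxm1] at s3
        linarith
  -- lower bound on C2
  have hS5 : (0:ℝ) ≤ (5:ℝ) * m + m * ((m:ℝ) - 1) / 2 := by
    rcases Nat.eq_zero_or_pos m with rfl | hm1
    · norm_num
    · have h7 : (1:ℝ) ≤ (m:ℝ) := by exact_mod_cast hm1
      nlinarith
  have hC2lb : ((n:ℝ) ^ m - ((5:ℝ) * m + m * ((m:ℝ) - 1) / 2) * (n:ℝ) ^ (m-1))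
      / (m.factorial : ℝ) ≤ (((n - 5).choose m : ℕ) : ℝ) := by
    have h5 := choose_lb n 5 m (by omega)
    rw [div_le_iff₀ hF0]
    nlinarith [h5]
  -- combine
  have hmain : ((n:ℝ) - 6) * (((n:ℝ) ^ m - ((5:ℝ) * m + m * ((m:ℝ) - 1) / 2) * (n:ℝ) ^ (m-1))
      / (m.factorial : ℝ)) ≤ ((PR G).card : ℝ) * (((n - 5).choose m : ℕ) : ℝ) := by
    calc ((n:ℝ) - 6) * (((n:ℝ) ^ m - ((5:ℝ) * m + m * ((m:ℝ) - 1) / 2) * (n:ℝ) ^ (m-1))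
          / (m.factorial : ℝ))
        ≤ ((n:ℝ) - 6) * (((n - 5).choose m : ℕ) : ℝ) :=
          mul_le_mul_of_nonneg_left hC2lb (by linarith)
      _ ≤ ((PR G).card : ℝ) * (((n - 5).choose m : ℕ) : ℝ) :=
          mul_le_mul_of_nonneg_right hPlb hC20
  have hexp : (n:ℝ) ^ (m+1) - (((5:ℝ) * m + m * ((m:ℝ) - 1) / 2) + 6) * (n:ℝ) ^ m ≤
      ((n:ℝ) - 6) * ((n:ℝ) ^ m - ((5:ℝ) * m + m * ((m:ℝ) - 1) / 2) * (n:ℝ) ^ (m-1)) := by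
    rcases Nat.eq_zero_or_pos m with rfl | hm1
    · norm_num
    · have hxm : (n:ℝ) * (n:ℝ) ^ (m - 1) = (n:ℝ) ^ m := by
        rw [← pow_succ']
        congr 1
        omega
      have hxm' : (n:ℝ) * (n:ℝ) ^ m = (n:ℝ) ^ (m+1) := by rw [← pow_succ']
      have hp1 : (0:ℝ) ≤ (n:ℝ) ^ (m-1) := by positivity
      have key : ((n:ℝ) - 6) * ((n:ℝ) ^ m - ((5:ℝ) * m + m * ((m:ℝ) - 1) / 2) * (n:ℝ) ^ (m-1))
          = (n:ℝ) ^ (m+1) - ((5:ℝ) * m + m * ((m:ℝ) - 1) / 2) * (n:ℝ) ^ m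
            - 6 * (n:ℝ) ^ m
            + 6 * (((5:ℝ) * m + m * ((m:ℝ) - 1) / 2) * (n:ℝ) ^ (m-1)) := by
        rw [← hxm', ← hxm]
        ring
      rw [key]
      have h8 : (0:ℝ) ≤ 6 * (((5:ℝ) * m + m * ((m:ℝ) - 1) / 2) * (n:ℝ) ^ (m-1)) := by
        have := mul_nonneg hS5 hp1
        linarith
      linarith
  have hdiv2 : ((n:ℝ) ^ (m+1) - (((5:ℝ) * m + m * ((m:ℝ) - 1) / 2) + 6) * (n:ℝ) ^ m)
      / (m.factorial : ℝ) ≤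
      ((n:ℝ) - 6) * (((n:ℝ) ^ m - ((5:ℝ) * m + m * ((m:ℝ) - 1) / 2) * (n:ℝ) ^ (m-1))
        / (m.factorial : ℝ)) := by
    rw [mul_div_assoc', div_eq_mul_inv, div_eq_mul_inv]
    exact mul_le_mul_of_nonneg_right hexp (by positivity)
  have hBF : ((n:ℝ) ^ (m+1) - (((5:ℝ) * m + m * ((m:ℝ) - 1) / 2) + 6) * (n:ℝ) ^ m)
      / (m.factorial : ℝ) - 28 * (n:ℝ) ^ m ≤ ((BF G (m+2)).card : ℝ) := by
    have t1 := hdiv2.trans hmain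
    linarith
  have e3 : ((n:ℝ) ^ (m+1) - (((5:ℝ) * m + m * ((m:ℝ) - 1) / 2) + 6) * (n:ℝ) ^ m)
      / (m.factorial : ℝ)
      = (n:ℝ) ^ (m+1) / (m.factorial : ℝ)
        - ((((5:ℝ) * m + m * ((m:ℝ) - 1) / 2) + 6) / (m.factorial : ℝ)) * (n:ℝ) ^ m := by
    ring
  have h6 : (((5:ℝ) * m + m * ((m:ℝ) - 1) / 2) + 6) / (m.factorial : ℝ) ≤
      ((5:ℝ) * m + m * ((m:ℝ) - 1) / 2) + 6 := div_le_self (by linarith) hF1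
  have h7 : (((5:ℝ) * m + m * ((m:ℝ) - 1) / 2) + 6) + 28 ≤
      5 * ((m:ℝ)+2) + ((m:ℝ)+2)^2 + 40 := by
    have h9 : (0:ℝ) ≤ (m:ℝ) := Nat.cast_nonneg m
    nlinarith
  have hxm0 : (0:ℝ) ≤ (n:ℝ) ^ m := by positivity
  rw [e3] at hBF
  have h10 : ((((5:ℝ) * m + m * ((m:ℝ) - 1) / 2) + 6) / (m.factorial : ℝ) + 28) * (n:ℝ) ^ m
      ≤ (5 * ((m:ℝ)+2) + ((m:ℝ)+2)^2 + 40) * (n:ℝ) ^ m :=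
    mul_le_mul_of_nonneg_right (by linarith) hxm0
  nlinarith [hBF, h10]

end EdgeAux


open EdgeAux

set_option maxHeartbeats 1600000

/-- For each fixed `k` there is a constant `M_k > 0` such that for all `T ∈ UB(n)` with
`n ≥ 4`: (i) for `1 ≤ k ≤ n−3` the number `A_{T,k}` of sets of `k` distinct pairwise
non-adjacent internal edges satisfies
`n^k/k! − (k(5k+1)/(2k!))n^{k−1} − M_k n^{k−2} ≤ A_{T,k} ≤ n^k/k! − (k(k+2)/k!)n^{k−1} + M_k n^{k−2}`;
(ii) for `2 ≤ k ≤ n−3` the number `B_{T,k}` of sets of `k` distinct internal edges with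
exactly two adjacent satisfies
`n^{k−1}/(2(k−2)!) − M_k n^{k−2} ≤ B_{T,k} ≤ (2/(k−2)!)n^{k−1} + M_k n^{k−2}`. -/
theorem edge_subset_counts (k : ℕ) (hk : 1 ≤ k) :
    ∃ M : ℝ, 0 < M ∧ ∀ n : ℕ, 4 ≤ n → ∀ G : SimpleGraph (Phylo.V n), Phylo.ubGraph n G →
      (k ≤ n - 3 →
        (1 / (k.factorial : ℝ)) * (n : ℝ) ^ k -
            (((k : ℝ) * (5 * k + 1)) / (2 * k.factorial)) * (n : ℝ) ^ ((k : ℤ) - 1) -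
            M * (n : ℝ) ^ ((k : ℤ) - 2) ≤ ((Phylo.Aset n k G).ncard : ℝ) ∧
        ((Phylo.Aset n k G).ncard : ℝ) ≤
          (1 / (k.factorial : ℝ)) * (n : ℝ) ^ k -
            (((k : ℝ) * (k + 2)) / k.factorial) * (n : ℝ) ^ ((k : ℤ) - 1) +
            M * (n : ℝ) ^ ((k : ℤ) - 2)) ∧
      (2 ≤ k → k ≤ n - 3 →
        (1 / (2 * ((k - 2).factorial : ℝ))) * (n : ℝ) ^ ((k : ℤ) - 1) -
            M * (n : ℝ) ^ ((k : ℤ) - 2) ≤ ((Phylo.Bset n k G).ncard : ℝ) ∧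
        ((Phylo.Bset n k G).ncard : ℝ) ≤
          (2 / ((k - 2).factorial : ℝ)) * (n : ℝ) ^ ((k : ℤ) - 1) +
            M * (n : ℝ) ^ ((k : ℤ) - 2)) := by
  classical
  refine ⟨16 * (k:ℝ)^4 + 6 * (k:ℝ)^2 + 100, by positivity, ?_⟩
  intro n hn G hG
  have hx0 : (0:ℝ) < (n:ℝ) := by exact_mod_cast (by omega : 0 < n)
  have hx4 : (4:ℝ) ≤ (n:ℝ) := by exact_mod_cast hn
  constructor
  · -- part (i)
    intro hkn
    rcases eq_or_lt_of_le hk with hk1 | hk2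
    · -- k = 1
      have hk1' : k = 1 := hk1.symm
      subst hk1'
      have hcard : ((Phylo.Aset n 1 G).ncard : ℝ) = (n:ℝ) - 3 := by
        rw [Aset_card, AF_one, KK, Finset.card_powersetCard, card_IE hn hG,
          Nat.choose_one_right, Nat.cast_sub (by omega : 3 ≤ n)]
        norm_num
      have hz1 : ((1:ℕ):ℤ) - 1 = 0 := by norm_num
      have hz2 : ((1:ℕ):ℤ) - 2 = -1 := by norm_num
      rw [hcard, hz1, hz2, zpow_zero, zpow_neg, zpow_one]
      have hinv : (0:ℝ) ≤ (16 * ((1:ℕ):ℝ)^4 + 6 * ((1:ℕ):ℝ)^2 + 100) * ((n:ℝ))⁻¹ := by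
        positivity
      constructor
      · push_cast at hinv ⊢
        norm_num at hinv ⊢
      · push_cast at hinv ⊢
        norm_num at hinv ⊢
    · -- k ≥ 2
      obtain ⟨m, rfl⟩ : ∃ m, k = m + 2 := ⟨k - 2, by omega⟩
      have hn5 : m + 5 ≤ n := by omega
      have ez1 : (n:ℝ) ^ (((m+2:ℕ):ℤ) - 1) = (n:ℝ) ^ (m+1) := by
        rw [show ((m+2:ℕ):ℤ) - 1 = ((m+1:ℕ):ℤ) by push_cast; ring, zpow_natCast]
      have ez2 : (n:ℝ) ^ (((m+2:ℕ):ℤ) - 2) = (n:ℝ) ^ m := by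
        rw [show ((m+2:ℕ):ℤ) - 2 = ((m:ℕ):ℤ) by push_cast; ring, zpow_natCast]
      rw [ez1, ez2, Aset_card]
      have hK1pos : (0:ℝ) < ((m+2).factorial : ℝ) := by
        exact_mod_cast (m+2).factorial_pos
      have hK11 : (1:ℝ) ≤ ((m+2).factorial : ℝ) := by
        exact_mod_cast (m+2).factorial_pos
      have hFpos : (0:ℝ) < (m.factorial : ℝ) := by exact_mod_cast m.factorial_pos
      have hK1F : ((m+2).factorial : ℝ) = ((m:ℝ)+2) * (((m:ℝ)+1) * (m.factorial : ℝ)) := by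
        rw [show (m+2).factorial = (m+2) * ((m+1) * m.factorial) by
          rw [Nat.factorial_succ, Nat.factorial_succ]]
        push_cast
        ring
      have hPub : ((PR G).card : ℝ) ≤ 2 * ((n:ℝ) - 3) := P_real_ub hn hG
      have hP0 : (0:ℝ) ≤ ((PR G).card : ℝ) := by positivity
      have hC30 : (0:ℝ) ≤ (((n-3).choose m : ℕ) : ℝ) := by positivity
      have hC3ub : (((n-3).choose m : ℕ) : ℝ) ≤ (n:ℝ)^m / (m.factorial : ℝ) := by
        have h5 := choose_ub_pow (n-3) m n (by omega)
        rw [le_div_iff₀ hFpos]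
        linarith
      have hPC3 : ((PR G).card : ℝ) * (((n-3).choose m : ℕ) : ℝ) ≤
          2 * (n:ℝ)^(m+1) / (m.factorial : ℝ) := by
        have t1 : ((PR G).card : ℝ) * (((n-3).choose m : ℕ) : ℝ) ≤
            (2 * (n:ℝ)) * ((n:ℝ)^m / (m.factorial : ℝ)) := by
          have u1 : ((PR G).card : ℝ) ≤ 2 * (n:ℝ) := by linarith
          have u2 : (0:ℝ) ≤ (n:ℝ)^m / (m.factorial : ℝ) := by positivity
          calc ((PR G).card : ℝ) * (((n-3).choose m : ℕ) : ℝ)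
              ≤ ((PR G).card : ℝ) * ((n:ℝ)^m / (m.factorial : ℝ)) :=
                mul_le_mul_of_nonneg_left hC3ub hP0
            _ ≤ (2 * (n:ℝ)) * ((n:ℝ)^m / (m.factorial : ℝ)) :=
                mul_le_mul_of_nonneg_right u1 u2
        have t2 : (2 * (n:ℝ)) * ((n:ℝ)^m / (m.factorial : ℝ)) =
            2 * (n:ℝ)^(m+1) / (m.factorial : ℝ) := by
          rw [pow_succ]
          ring
        linarith
      constructor
      · -- lower bound
        have hN2 := KK_le_AF hn hG (m+2)
        rw [show m + 2 - 2 = m from rfl, KK, Finset.card_powersetCard, card_IE hn hG] at hN2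
        have hcastN2 : (((n-3).choose (m+2) : ℕ) : ℝ) ≤ ((AF G (m+2)).card : ℝ)
            + ((PR G).card : ℝ) * (((n-3).choose m : ℕ) : ℝ) := by
          exact_mod_cast hN2
        have hlb1 := choose_lb n 3 (m+2) (by omega)
        rw [show m + 2 - 1 = m + 1 from rfl] at hlb1
        have hco : (((m+2:ℕ):ℝ) * (5 * ((m+2:ℕ):ℝ) + 1)) / (2 * ((m+2).factorial : ℝ))
            = ((3:ℝ) * ((m+2:ℕ):ℝ) + ((m+2:ℕ):ℝ) * (((m+2:ℕ):ℝ) - 1) / 2)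
                / ((m+2).factorial : ℝ)
              + 2 / (m.factorial : ℝ) := by
          rw [hK1F]
          have hF0 : (m.factorial : ℝ) ≠ 0 := ne_of_gt hFpos
          field_simp
          push_cast
          ring
        have d1 : ((n:ℝ)^(m+2) - ((3:ℝ) * ((m+2:ℕ):ℝ)
            + ((m+2:ℕ):ℝ) * (((m+2:ℕ):ℝ) - 1) / 2) * (n:ℝ)^(m+1))
            / ((m+2).factorial : ℝ) ≤ (((n-3).choose (m+2) : ℕ) : ℝ) := by
          rw [div_le_iff₀ hK1pos]
          nlinarith [hlb1]
        have expand : (1 / ((m+2).factorial : ℝ)) * (n:ℝ)^(m+2)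
            - (((3:ℝ) * ((m+2:ℕ):ℝ) + ((m+2:ℕ):ℝ) * (((m+2:ℕ):ℝ) - 1) / 2)
                / ((m+2).factorial : ℝ) + 2 / (m.factorial : ℝ)) * (n:ℝ)^(m+1)
            = ((n:ℝ)^(m+2) - ((3:ℝ) * ((m+2:ℕ):ℝ)
                + ((m+2:ℕ):ℝ) * (((m+2:ℕ):ℝ) - 1) / 2) * (n:ℝ)^(m+1))
              / ((m+2).factorial : ℝ) - 2 * (n:ℝ)^(m+1) / (m.factorial : ℝ) := by
          ring
        have hMx : (0:ℝ) ≤ (16 * ((m+2:ℕ):ℝ)^4 + 6 * ((m+2:ℕ):ℝ)^2 + 100) * (n:ℝ)^m := by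
          positivity
        rw [hco]
        rw [expand]
        linarith
      · -- upper bound
        rcases Nat.lt_or_ge n 6 with hn6 | hn6
        · -- n = 5, m = 0
          have hn5' : n = 5 := by omega
          have hm0 : m = 0 := by omega
          subst hm0
          subst hn5'
          have h1 : (AF G 2).card ≤ (KK G 2).card :=
            Finset.card_le_card (Finset.filter_subset _ _)
          rw [KK, Finset.card_powersetCard, card_IE hn hG] at h1
          have h2 : (5 - 3).choose 2 = 1 := by norm_num
          rw [h2] at h1
          have hAle : ((AF G (0+2)).card : ℝ) ≤ 1 := by exact_mod_cast h1
          push_cast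
          norm_num
          nlinarith [hAle]
        · -- n ≥ 6
          have hN3 := AF_add_BF_le G (m+2)
          rw [KK, Finset.card_powersetCard, card_IE hn hG] at hN3
          have hcastN3 : ((AF G (m+2)).card : ℝ) + ((BF G (m+2)).card : ℝ) ≤
              (((n-3).choose (m+2) : ℕ) : ℝ) := by
            exact_mod_cast hN3
          have hub2 := choose_ub2 n 3 (m+2) (by omega)
          rw [show m + 2 - 1 = m + 1 from rfl, show m + 2 - 2 = m from rfl] at hub2
          have hBlb := B_real_lb hn hn6 hG m hkn
          have hS3 : (0:ℝ) ≤ (3:ℝ) * ((m+2:ℕ):ℝ) + ((m+2:ℕ):ℝ) * (((m+2:ℕ):ℝ) - 1) / 2 := by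
            push_cast
            nlinarith [Nat.cast_nonneg (α := ℝ) m]
          have hCK : (((n-3).choose (m+2) : ℕ) : ℝ) ≤
              ((n:ℝ)^(m+2) - ((3:ℝ) * ((m+2:ℕ):ℝ)
                + ((m+2:ℕ):ℝ) * (((m+2:ℕ):ℝ) - 1) / 2) * (n:ℝ)^(m+1)
                + ((3:ℝ) * ((m+2:ℕ):ℝ) + ((m+2:ℕ):ℝ) * (((m+2:ℕ):ℝ) - 1) / 2)^2 * (n:ℝ)^m)
              / ((m+2).factorial : ℝ) := by
            rw [le_div_iff₀ hK1pos]
            nlinarith [hub2]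
          have hnum : ((m+2:ℕ):ℝ) * (((m+2:ℕ):ℝ) + 2) ≤
              ((3:ℝ) * ((m+2:ℕ):ℝ) + ((m+2:ℕ):ℝ) * (((m+2:ℕ):ℝ) - 1) / 2)
                + ((m:ℝ)+2) * ((m:ℝ)+1) := by
            push_cast
            nlinarith [Nat.cast_nonneg (α := ℝ) m]
          have heq : ((3:ℝ) * ((m+2:ℕ):ℝ) + ((m+2:ℕ):ℝ) * (((m+2:ℕ):ℝ) - 1) / 2)
                / ((m+2).factorial : ℝ) + 1 / (m.factorial : ℝ)
              = (((3:ℝ) * ((m+2:ℕ):ℝ) + ((m+2:ℕ):ℝ) * (((m+2:ℕ):ℝ) - 1) / 2)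
                  + ((m:ℝ)+2) * ((m:ℝ)+1)) / ((m+2).factorial : ℝ) := by
            rw [hK1F]
            have hF0 : (m.factorial : ℝ) ≠ 0 := ne_of_gt hFpos
            field_simp
          have hxp : (0:ℝ) ≤ (n:ℝ)^(m+1) := by positivity
          have hxm : (0:ℝ) ≤ (n:ℝ)^m := by positivity
          have key1 : (((m+2:ℕ):ℝ) * (((m+2:ℕ):ℝ) + 2) / ((m+2).factorial : ℝ))
                * (n:ℝ)^(m+1)
              ≤ (((3:ℝ) * ((m+2:ℕ):ℝ) + ((m+2:ℕ):ℝ) * (((m+2:ℕ):ℝ) - 1) / 2)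
                  / ((m+2).factorial : ℝ) + 1 / (m.factorial : ℝ)) * (n:ℝ)^(m+1) := by
            rw [heq]
            exact mul_le_mul_of_nonneg_right
              ((div_le_div_iff_of_pos_right hK1pos).mpr hnum) hxp
          have key2 : ((3:ℝ) * ((m+2:ℕ):ℝ) + ((m+2:ℕ):ℝ) * (((m+2:ℕ):ℝ) - 1) / 2)^2
                / ((m+2).factorial : ℝ)
              ≤ ((3:ℝ) * ((m+2:ℕ):ℝ) + ((m+2:ℕ):ℝ) * (((m+2:ℕ):ℝ) - 1) / 2)^2 :=
            div_le_self (by positivity) hK11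
          have key3 : ((3:ℝ) * ((m+2:ℕ):ℝ) + ((m+2:ℕ):ℝ) * (((m+2:ℕ):ℝ) - 1) / 2)^2
              + (5 * ((m:ℝ)+2) + ((m:ℝ)+2)^2 + 40)
              ≤ 16 * ((m+2:ℕ):ℝ)^4 + 6 * ((m+2:ℕ):ℝ)^2 + 100 := by
            push_cast
            have hm0 : (0:ℝ) ≤ (m:ℝ) := Nat.cast_nonneg m
            have h1 : (3:ℝ) * ((m:ℝ)+2) + ((m:ℝ)+2) * (((m:ℝ)+2) - 1) / 2
                ≤ 4 * ((m:ℝ)+2)^2 := by nlinarith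
            have h2 : ((3:ℝ) * ((m:ℝ)+2) + ((m:ℝ)+2) * (((m:ℝ)+2) - 1) / 2)^2
                ≤ 16 * ((m:ℝ)+2)^4 := by nlinarith
            nlinarith
          have expand2 : ((n:ℝ)^(m+2) - ((3:ℝ) * ((m+2:ℕ):ℝ)
                + ((m+2:ℕ):ℝ) * (((m+2:ℕ):ℝ) - 1) / 2) * (n:ℝ)^(m+1)
                + ((3:ℝ) * ((m+2:ℕ):ℝ) + ((m+2:ℕ):ℝ) * (((m+2:ℕ):ℝ) - 1) / 2)^2 * (n:ℝ)^m)
              / ((m+2).factorial : ℝ)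
              - ((n:ℝ)^(m+1) / (m.factorial : ℝ)
                  - (5 * ((m:ℝ)+2) + ((m:ℝ)+2)^2 + 40) * (n:ℝ)^m)
              = (1 / ((m+2).factorial : ℝ)) * (n:ℝ)^(m+2)
                - (((3:ℝ) * ((m+2:ℕ):ℝ) + ((m+2:ℕ):ℝ) * (((m+2:ℕ):ℝ) - 1) / 2)
                    / ((m+2).factorial : ℝ) + 1 / (m.factorial : ℝ)) * (n:ℝ)^(m+1)
                + (((3:ℝ) * ((m+2:ℕ):ℝ) + ((m+2:ℕ):ℝ) * (((m+2:ℕ):ℝ) - 1) / 2)^2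
                    / ((m+2).factorial : ℝ)
                   + (5 * ((m:ℝ)+2) + ((m:ℝ)+2)^2 + 40)) * (n:ℝ)^m := by
            ring
          have hkey2' : (((3:ℝ) * ((m+2:ℕ):ℝ) + ((m+2:ℕ):ℝ) * (((m+2:ℕ):ℝ) - 1) / 2)^2
                / ((m+2).factorial : ℝ)
               + (5 * ((m:ℝ)+2) + ((m:ℝ)+2)^2 + 40)) * (n:ℝ)^m
              ≤ (16 * ((m+2:ℕ):ℝ)^4 + 6 * ((m+2:ℕ):ℝ)^2 + 100) * (n:ℝ)^m :=
            mul_le_mul_of_nonneg_right (by linarith) hxm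
          have hA2 : ((AF G (m+2)).card : ℝ) ≤
              ((n:ℝ)^(m+2) - ((3:ℝ) * ((m+2:ℕ):ℝ)
                + ((m+2:ℕ):ℝ) * (((m+2:ℕ):ℝ) - 1) / 2) * (n:ℝ)^(m+1)
                + ((3:ℝ) * ((m+2:ℕ):ℝ) + ((m+2:ℕ):ℝ) * (((m+2:ℕ):ℝ) - 1) / 2)^2 * (n:ℝ)^m)
              / ((m+2).factorial : ℝ)
              - ((n:ℝ)^(m+1) / (m.factorial : ℝ)
                  - (5 * ((m:ℝ)+2) + ((m:ℝ)+2)^2 + 40) * (n:ℝ)^m) := by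
            linarith
          rw [expand2] at hA2
          linarith [key1, hkey2', hA2]
  · -- part (ii)
    intro hk2 hkn
    obtain ⟨m, rfl⟩ : ∃ m, k = m + 2 := ⟨k - 2, by omega⟩
    have hn5 : m + 5 ≤ n := by omega
    have ez1 : (n:ℝ) ^ (((m+2:ℕ):ℤ) - 1) = (n:ℝ) ^ (m+1) := by
      rw [show ((m+2:ℕ):ℤ) - 1 = ((m+1:ℕ):ℤ) by push_cast; ring, zpow_natCast]
    have ez2 : (n:ℝ) ^ (((m+2:ℕ):ℤ) - 2) = (n:ℝ) ^ m := by
      rw [show ((m+2:ℕ):ℤ) - 2 = ((m:ℕ):ℤ) by push_cast; ring, zpow_natCast]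
    rw [ez1, ez2, Bset_card, show m + 2 - 2 = m from rfl]
    have hFpos : (0:ℝ) < (m.factorial : ℝ) := by exact_mod_cast m.factorial_pos
    have hPub : ((PR G).card : ℝ) ≤ 2 * ((n:ℝ) - 3) := P_real_ub hn hG
    have hP0 : (0:ℝ) ≤ ((PR G).card : ℝ) := by positivity
    have hC30 : (0:ℝ) ≤ (((n-3).choose m : ℕ) : ℝ) := by positivity
    have hC3ub : (((n-3).choose m : ℕ) : ℝ) ≤ (n:ℝ)^m / (m.factorial : ℝ) := by
      have h5 := choose_ub_pow (n-3) m n (by omega)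
      rw [le_div_iff₀ hFpos]
      linarith
    have hxp : (0:ℝ) ≤ (n:ℝ)^(m+1) := by positivity
    have hxm : (0:ℝ) ≤ (n:ℝ)^m := by positivity
    have hMx : (0:ℝ) ≤ (16 * ((m+2:ℕ):ℝ)^4 + 6 * ((m+2:ℕ):ℝ)^2 + 100) * (n:ℝ)^m := by
      positivity
    constructor
    · -- lower bound
      rcases Nat.lt_or_ge n 6 with hn6 | hn6
      · -- n = 5, m = 0
        have hn5' : n = 5 := by omega
        have hm0 : m = 0 := by omega
        subst hm0
        subst hn5'
        have hB0 : (0:ℝ) ≤ ((BF G (0+2)).card : ℝ) := by positivity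
        push_cast
        norm_num
        nlinarith [hB0]
      · -- n ≥ 6
        have hBlb := B_real_lb hn hn6 hG m hkn
        have hdiff : (n:ℝ)^(m+1) / (m.factorial : ℝ)
            - (1 / (2 * (m.factorial : ℝ))) * (n:ℝ)^(m+1)
            = (n:ℝ)^(m+1) / (2 * (m.factorial : ℝ)) := by
          field_simp
          ring
        have hp : (0:ℝ) ≤ (n:ℝ)^(m+1) / (2 * (m.factorial : ℝ)) := by positivity
        have hCBM : (5 * ((m:ℝ)+2) + ((m:ℝ)+2)^2 + 40)
            ≤ 16 * ((m+2:ℕ):ℝ)^4 + 6 * ((m+2:ℕ):ℝ)^2 + 100 := by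
          push_cast
          nlinarith [Nat.cast_nonneg (α := ℝ) m]
        have hmul : (5 * ((m:ℝ)+2) + ((m:ℝ)+2)^2 + 40) * (n:ℝ)^m
            ≤ (16 * ((m+2:ℕ):ℝ)^4 + 6 * ((m+2:ℕ):ℝ)^2 + 100) * (n:ℝ)^m :=
          mul_le_mul_of_nonneg_right hCBM hxm
        linarith
    · -- upper bound
      have hBub := BF_ub hn hG (show 2 ≤ m + 2 by omega)
      rw [show m + 2 - 2 = m from rfl] at hBub
      have hcast : ((BF G (m+2)).card : ℝ) ≤
          ((PR G).card : ℝ) * (((n-3).choose m : ℕ) : ℝ) := by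
        exact_mod_cast hBub
      have t1 : ((PR G).card : ℝ) * (((n-3).choose m : ℕ) : ℝ) ≤
          (2 * (n:ℝ)) * ((n:ℝ)^m / (m.factorial : ℝ)) := by
        have u1 : ((PR G).card : ℝ) ≤ 2 * (n:ℝ) := by linarith
        have u2 : (0:ℝ) ≤ (n:ℝ)^m / (m.factorial : ℝ) := by positivity
        calc ((PR G).card : ℝ) * (((n-3).choose m : ℕ) : ℝ)
            ≤ ((PR G).card : ℝ) * ((n:ℝ)^m / (m.factorial : ℝ)) :=
              mul_le_mul_of_nonneg_left hC3ub hP0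
          _ ≤ (2 * (n:ℝ)) * ((n:ℝ)^m / (m.factorial : ℝ)) :=
              mul_le_mul_of_nonneg_right u1 u2
      have t2 : (2 * (n:ℝ)) * ((n:ℝ)^m / (m.factorial : ℝ)) =
          (2 / (m.factorial : ℝ)) * (n:ℝ)^(m+1) := by
        rw [pow_succ]
        ring
      linarith
end
end
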